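/- arXiv:2604.20778 — 7 statements merged into one kernel-verified Lean document; each statement's English description precedes it below -/
import Mathlib

section
/- Let M be a finite matroid and let X, Y be subsets of the ground set of M. Then r_M(X) + r_M(Y) = r_M(X ∪ Y) + r_M(X ∩ Y) if and only if M has an independent set B such that B ∩ X is a basis of X in M and B ∩ Y is a basis of Y in M. -/
open Set

namespace Matroid

variable {α : Type*} {ι : Type*}

/-- The deletion of a set `D` of elements from `M`. -/
def delete' (M : Matroid α) (D : Set α) : Matroid α := M ↾ (M.E \ D)

/-- The contraction of a set `C` of elements from `M`, defined as the dual of the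
deletion of `C` from the dual. -/
def contract' (M : Matroid α) (C : Set α) : Matroid α := (M✶.delete' C)✶

/-- A circuit of `M` is a minimal dependent subset of the ground set. -/
def Circuit (M : Matroid α) (C : Set α) : Prop :=
  C ⊆ M.E ∧ ¬ M.Indep C ∧ ∀ I, I ⊂ C → M.Indep I

/-- The rank of a set `X` in `M`, valued in `ℕ∞`. It is the supremum of the `encard`s of
the independent subsets of `X`; equivalently, the `encard` of any basis of `X`. -/
noncomputable def eRk' (M : Matroid α) (X : Set α) : ℕ∞ :=
  ⨆ I : {I : Set α // M.Indep I ∧ I ⊆ X}, I.1.encard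

/-- The rank of the matroid `M`, valued in `ℕ∞`. -/
noncomputable def eRank' (M : Matroid α) : ℕ∞ := M.eRk' M.E

/-- The nullity of a set `X` in `M`, valued in `ℕ∞` : the corank of the restriction
of `M` to `X`. -/
noncomputable def nullity (M : Matroid α) (X : Set α) : ℕ∞ := (M ↾ X)✶.eRank'

/-- The relative rank of `Y` with respect to `X` : the rank of `Y \ X` in `M / X`. -/
noncomputable def eRelRk (M : Matroid α) (X Y : Set α) : ℕ∞ := (M.contract' X).eRk' (Y \ X)

/-- `B` is a mutual basis in `M` for the indexed set family `X` if `B` is independent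
and `X i ∩ B` is a basis of `X i` in `M` for each index `i`. -/
def IsMutualBasis (M : Matroid α) (B : Set α) (X : ι → Set α) : Prop :=
  M.Indep B ∧ ∀ i, M.IsBasis (X i ∩ B) (X i)

/-- An indexed set family is modular in `M` if it has a mutual basis. -/
def IsModularFamily (M : Matroid α) (X : ι → Set α) : Prop := ∃ B, M.IsMutualBasis B X

/-- `B` is a mutual basis in `M` for the collection `𝓧` of sets if `B` is independent
and `X ∩ B` is a basis of `X` in `M` for each `X ∈ 𝓧`. -/
def IsMutualBasisSet (M : Matroid α) (B : Set α) (𝓧 : Set (Set α)) : Prop :=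
  M.Indep B ∧ ∀ X ∈ 𝓧, M.IsBasis (X ∩ B) X

/-- A collection of sets is modular in `M` if it has a mutual basis. -/
def IsModularSetFamily (M : Matroid α) (𝓧 : Set (Set α)) : Prop :=
  ∃ B, M.IsMutualBasisSet B 𝓧

/-- `(X, Y)` is a modular pair in `M` if `{X, Y}` has a mutual basis. -/
def IsModularPair (M : Matroid α) (X Y : Set α) : Prop := M.IsModularSetFamily {X, Y}

/-- A flat `F` of `M` is modular if it forms a modular pair with every flat of `M`. -/
def IsModularFlat (M : Matroid α) (F : Set α) : Prop :=
  M.IsFlat F ∧ ∀ G, M.IsFlat G → M.IsModularPair F G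

/-- A matroid is modular if every flat is modular. -/
def Modular (M : Matroid α) : Prop := ∀ F, M.IsFlat F → M.IsModularFlat F

/-- An indexed family of sets is skew in `M` if it is modular in `M`, and the
intersection of any two distinct members consists of loops. -/
def IsSkewFamily (M : Matroid α) (X : ι → Set α) : Prop :=
  M.IsModularFamily X ∧ ∀ ⦃i j⦄, i ≠ j → X i ∩ X j ⊆ M.closure ∅

/-- A modular cut of `M` : a collection of flats that is up-closed, closed under
intersections of modular pairs, and closed under intersections of infinite
modular chains. -/
def IsModularCut (M : Matroid α) (𝓕 : Set (Set α)) : Prop :=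
  (∀ F ∈ 𝓕, M.IsFlat F) ∧
  (∀ F F', F ∈ 𝓕 → M.IsFlat F' → F ⊆ F' → F' ∈ 𝓕) ∧
  (∀ F F', F ∈ 𝓕 → F' ∈ 𝓕 → M.IsModularPair F F' → F ∩ F' ∈ 𝓕) ∧
  (∀ 𝓒 ⊆ 𝓕, 𝓒.Infinite → IsChain (· ⊆ ·) 𝓒 → M.IsModularSetFamily 𝓒 → ⋂₀ 𝓒 ∈ 𝓕)

/-- `N` is a quotient of `M` if they have the same ground set, and every set's closure
in `M` is contained in its closure in `N`. -/
def IsQuotient (N M : Matroid α) : Prop := N.E = M.E ∧ ∀ X, M.closure X ⊆ N.closure X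

/-- A hyperplane of `M` is a maximal proper flat of `M`. -/
def Hyperplane (M : Matroid α) (H : Set α) : Prop :=
  M.IsFlat H ∧ H ≠ M.E ∧ ∀ F, M.IsFlat F → H ⊂ F → F = M.E

/-- The discrepancy of the pair `(N, M)` : the minimum of `(B \ B₀).encard` over all
`(N,M)`-basis pairs, i.e. pairs `(B₀, B)` where `B₀` is a base of `N`, `B` is a base
of `M` and `B₀ ⊆ B`. -/
noncomputable def discrepancy (N M : Matroid α) : ℕ∞ :=
  ⨅ p : {p : Set α × Set α // N.IsBase p.1 ∧ M.IsBase p.2 ∧ p.1 ⊆ p.2},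
    (p.1.2 \ p.1.1).encard


lemma eRk_eq_encard_of_basis' {M : Matroid α} {I X : Set α} (hI : M.IsBasis I X) :
    M.eRk' X = I.encard := by
  refine le_antisymm (iSup_le ?_) ?_
  · rintro ⟨J, hJ, hJX⟩
    obtain ⟨K, hK, hJK⟩ := hJ.subset_isBasis_of_subset hJX hI.subset_ground
    exact (encard_mono hJK).trans (hK.encard_eq_encard hI).le
  · exact le_iSup (fun I : {I : Set α // M.Indep I ∧ I ⊆ X} ↦ I.1.encard)
      ⟨I, hI.indep, hI.subset⟩

lemma encard_le_eRk' {M : Matroid α} {I X : Set α} (hI : M.Indep I) (hIX : I ⊆ X) :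
    I.encard ≤ M.eRk' X :=
  le_iSup (fun I : {I : Set α // M.Indep I ∧ I ⊆ X} ↦ I.1.encard) ⟨I, hI, hIX⟩

lemma eRk_ne_top' (M : Matroid α) [M.Finite] {X : Set α} (hX : X ⊆ M.E) :
    M.eRk' X ≠ ⊤ := by
  obtain ⟨I, hI⟩ := M.exists_isBasis X hX
  rw [eRk_eq_encard_of_basis' hI]
  exact (M.set_finite I (hI.subset.trans hX)).encard_lt_top.ne

lemma basis_of_encard_eq_eRk' {M : Matroid α} [M.Finite] {I X : Set α} (hI : M.Indep I)
    (hIX : I ⊆ X) (hX : X ⊆ M.E) (hcard : I.encard = M.eRk' X) : M.IsBasis I X := by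
  obtain ⟨J, hJ, hIJ⟩ := hI.subset_isBasis_of_subset hIX hX
  rwa [(M.set_finite J (hJ.subset.trans hX)).eq_of_subset_of_encard_le' hIJ
    (by rw [hcard, eRk_eq_encard_of_basis' hJ])]

lemma eRk_submod' (M : Matroid α) {X Y : Set α} (hX : X ⊆ M.E) (hY : Y ⊆ M.E) :
    M.eRk' (X ∪ Y) + M.eRk' (X ∩ Y) ≤ M.eRk' X + M.eRk' Y := by
  obtain ⟨I, hI⟩ := M.exists_isBasis (X ∩ Y) (inter_subset_left.trans hX)
  obtain ⟨B, hB, hBI⟩ := hI.exists_isBasis_inter_eq_of_superset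
    (inter_subset_left.trans subset_union_left) (union_subset hX hY)
  have hsum : (X ∩ B).encard + (Y ∩ B).encard = B.encard + I.encard := by
    rw [← encard_union_add_encard_inter, ← union_inter_distrib_right,
      inter_eq_self_of_subset_right hB.subset, ← inter_inter_distrib_right,
      inter_comm (X ∩ Y) B, hBI]
  rw [eRk_eq_encard_of_basis' hB, eRk_eq_encard_of_basis' hI, ← hsum]
  exact add_le_add (encard_le_eRk' (hB.indep.subset inter_subset_right) inter_subset_left)
    (encard_le_eRk' (hB.indep.subset inter_subset_right) inter_subset_left)

/-- In a finite matroid `M`, subsets `X, Y` of the ground set satisfy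
`r (X) + r (Y) = r (X ∪ Y) + r (X ∩ Y)` if and only if `M` has an independent set `B`
with `X ∩ B` a basis of `X` and `Y ∩ B` a basis of `Y`. -/
theorem eRk_add_eRk_eq_iff_exists_mutualBasis (M : Matroid α) [M.Finite]
    {X Y : Set α} (hX : X ⊆ M.E) (hY : Y ⊆ M.E) :
    M.eRk' X + M.eRk' Y = M.eRk' (X ∪ Y) + M.eRk' (X ∩ Y) ↔
      ∃ B, M.Indep B ∧ M.IsBasis (X ∩ B) X ∧ M.IsBasis (Y ∩ B) Y := by
  constructor
  · intro heq
    obtain ⟨I, hI⟩ := M.exists_isBasis (X ∩ Y) (inter_subset_left.trans hX)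
    obtain ⟨B, hB, hBI⟩ := hI.exists_isBasis_inter_eq_of_superset
      (inter_subset_left.trans subset_union_left) (union_subset hX hY)
    have hsum : (X ∩ B).encard + (Y ∩ B).encard = B.encard + I.encard := by
      rw [← encard_union_add_encard_inter, ← union_inter_distrib_right,
        inter_eq_self_of_subset_right hB.subset, ← inter_inter_distrib_right,
      inter_comm (X ∩ Y) B, hBI]
    have hsum2 : (X ∩ B).encard + (Y ∩ B).encard = M.eRk' X + M.eRk' Y := by
      rw [hsum, ← eRk_eq_encard_of_basis' hB, ← eRk_eq_encard_of_basis' hI, ← heq]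
    have haX : (X ∩ B).encard ≤ M.eRk' X :=
      encard_le_eRk' (hB.indep.subset inter_subset_right) inter_subset_left
    have haY : (Y ∩ B).encard ≤ M.eRk' Y :=
      encard_le_eRk' (hB.indep.subset inter_subset_right) inter_subset_left
    have hXeq : (X ∩ B).encard = M.eRk' X := by
      refine le_antisymm haX ?_
      have : M.eRk' X + M.eRk' Y ≤ (X ∩ B).encard + M.eRk' Y := by
        rw [← hsum2]; exact add_le_add_right haY _
      exact (WithTop.add_le_add_iff_right (M.eRk_ne_top' hY)).mp this
    have hYeq : (Y ∩ B).encard = M.eRk' Y := by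
      refine le_antisymm haY ?_
      have : M.eRk' X + M.eRk' Y ≤ M.eRk' X + (Y ∩ B).encard := by
        rw [← hsum2]; exact add_le_add_left haX _
      exact (WithTop.add_le_add_iff_left (M.eRk_ne_top' hX)).mp this
    exact ⟨B, hB.indep, basis_of_encard_eq_eRk' (hB.indep.subset inter_subset_right)
      inter_subset_left hX hXeq, basis_of_encard_eq_eRk' (hB.indep.subset inter_subset_right)
      inter_subset_left hY hYeq⟩
  · rintro ⟨B, hB, hBX, hBY⟩
    refine le_antisymm ?_ (M.eRk_submod' hX hY)
    have hU : M.IsBasis ((X ∪ Y) ∩ B) (X ∪ Y) := by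
      refine (hB.subset inter_subset_right).isBasis_of_subset_of_subset_closure
        inter_subset_left (union_subset ?_ ?_)
      · exact hBX.subset_closure.trans (M.closure_subset_closure
          (inter_subset_inter_left _ subset_union_left))
      · exact hBY.subset_closure.trans (M.closure_subset_closure
          (inter_subset_inter_left _ subset_union_right))
    have hsum : (X ∩ B).encard + (Y ∩ B).encard
        = ((X ∪ Y) ∩ B).encard + ((X ∩ Y) ∩ B).encard := by
      rw [← encard_union_add_encard_inter, ← union_inter_distrib_right,
        ← inter_inter_distrib_right]
    rw [eRk_eq_encard_of_basis' hBX, eRk_eq_encard_of_basis' hBY, hsum]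
    exact add_le_add (eRk_eq_encard_of_basis' hU).ge
      (encard_le_eRk' (hB.subset inter_subset_right) inter_subset_left)
end Matroid
end

section
/- Let ⟨X_a : a ∈ A⟩ be a pairwise disjoint family of subsets of the ground set of a matroid M. Then the following are equivalent: (1) ⟨X_a⟩ is skew in M; (2) the restriction M | ⋃_a X_a is the direct sum of the restrictions M | X_a over a ∈ A; (3) every circuit of M contained in ⋃_a X_a is contained in X_a for some a ∈ A. -/
open Set

namespace Matroid

variable {α : Type*} {ι : Type*}

/-- Every dependent set contains a circuit. -/
lemma exists_circuit_subset_aux (M : Matroid α) {D : Set α} (hDE : D ⊆ M.E)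
    (hD : ¬ M.Indep D) : ∃ C ⊆ D, M.Circuit C := by
  obtain ⟨I, hI⟩ := M.exists_isBasis D hDE
  obtain ⟨e, heD, heI⟩ : ∃ e, e ∈ D ∧ e ∉ I := by
    by_contra h
    push_neg at h
    have : I = D := hI.subset.antisymm (fun x hx => h x hx)
    exact hD (this ▸ hI.indep)
  set Js : Set (Set α) := {K | K ⊆ I ∧ e ∈ M.closure K} with hJs
  have hIJ : I ∈ Js := ⟨Subset.rfl, hI.subset_closure heD⟩
  set J : Set α := ⋂₀ Js with hJdef
  have hJI : J ⊆ I := sInter_subset_of_mem hIJ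
  have hJind : M.Indep J := hI.indep.subset hJI
  have heJcl : e ∈ M.closure J := by
    rw [hJdef, hI.indep.closure_sInter_eq_biInter_closure_of_forall_subset ⟨I, hIJ⟩
      (fun K hK => hK.1)]
    exact mem_iInter₂.2 fun K hK => hK.2
  have heJ : e ∉ J := fun h => heI (hJI h)
  have hmin : ∀ y ∈ J, e ∉ M.closure (J \ {y}) := by
    intro y hy hcl
    have hmem : J \ {y} ∈ Js := ⟨diff_subset.trans hJI, hcl⟩
    exact (sInter_subset_of_mem hmem hy).2 rfl
  have heE : e ∈ M.E := hDE heD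
  refine ⟨insert e J, insert_subset heD (hJI.trans hI.subset),
    insert_subset heE hJind.subset_ground, ?_, ?_⟩
  · intro hind
    rcases (hJind.mem_closure_iff.1 heJcl) with hdep | h
    · exact hdep.not_indep hind
    · exact heJ h
  · intro K hK
    by_cases heK : e ∈ K
    · have hK' : K \ {e} ⊆ J := by
        rintro x ⟨hxK, hxe⟩
        rcases hK.subset hxK with h | h
        · exact absurd h hxe
        · exact h
      have hne : K \ {e} ≠ J := by
        intro h
        exact hK.ne (by rw [← h, insert_diff_singleton, insert_eq_self.2 heK])
      obtain ⟨y, hyJ, hyK⟩ := exists_of_ssubset (hK'.ssubset_of_ne hne)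
      have hKsub : K \ {e} ⊆ J \ {y} := fun x hx => ⟨hK' hx, fun h => hyK (h ▸ hx)⟩
      have hecl : e ∉ M.closure (K \ {e}) :=
        fun h => hmin y hyJ (M.closure_subset_closure hKsub h)
      have hind : M.Indep (insert e (K \ {e})) :=
        ((hJind.subset hK').insert_indep_iff).2 (Or.inl ⟨heE, hecl⟩)
      rwa [insert_diff_singleton, insert_eq_self.2 heK] at hind
    · refine hJind.subset fun x hx => ?_
      rcases hK.subset hx with h | h
      · exact absurd (h ▸ hx) heK
      · exact h


/-- If `B` is a mutual basis for the disjoint family `X`, and `L ⊆ X i` is independent,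
then `L` together with the parts of the mutual basis outside `X i` is independent. -/
lemma skew_aux (M : Matroid α) (X : ι → Set α) (hXE : ∀ i, X i ⊆ M.E)
    (hdj : Pairwise (Function.onFun Disjoint X)) {B : Set α} (hB : M.Indep B)
    (hBX : ∀ k, M.IsBasis (X k ∩ B) (X k)) (i : ι) {L : Set α} (hL : M.Indep L)
    (hLX : L ⊆ X i) : M.Indep (L ∪ ((⋃ k, X k ∩ B) \ X i)) := by
  set W0 : Set α := ⋃ k, X k ∩ B with hW0
  have hW0B : W0 ⊆ B := iUnion_subset fun k => inter_subset_right
  have hW0i : M.Indep W0 := hB.subset hW0B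
  set B' : Set α := W0 \ X i with hB'def
  obtain ⟨D, hD, hLD⟩ := hL.subset_isBasis_of_subset hLX (hXE i)
  set F : Set α := M.closure W0 with hF
  have hFE : F ⊆ M.E := M.closure_subset_ground W0
  have hW0base : (M ↾ F).IsBase W0 := (isBase_restrict_iff hFE).2 hW0i.isBasis_closure
  have hXF : ∀ k, X k ⊆ F := fun k =>
    (hBX k).subset_closure.trans (M.closure_subset_closure (subset_iUnion (fun k => X k ∩ B) k))
  have hDF : D ⊆ F := hD.subset.trans (hXF i)
  have hDres : (M ↾ F).Indep D := restrict_indep_iff.2 ⟨hD.indep, hDF⟩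
  obtain ⟨W, hWbase, hDW, hWsub⟩ := hDres.exists_isBase_subset_union_isBase hW0base
  have hWbas : M.IsBasis W F := (isBase_restrict_iff hFE).1 hWbase
  have hWind : M.Indep W := hWbas.indep
  have hWXi : W ∩ X i = D := hD.inter_eq_of_subset_indep hDW hWind
  have hWDB' : W ⊆ D ∪ (W ∩ B') := by
    intro x hx
    rcases hWsub hx with hxD | hxW0
    · exact Or.inl hxD
    by_cases hxi : x ∈ X i
    · exact Or.inl (hWXi ▸ ⟨hx, hxi⟩)
    · exact Or.inr ⟨hx, hxW0, hxi⟩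
  have hB'W : B' ⊆ W := by
    by_contra h
    obtain ⟨y, hyB', hyW⟩ := not_subset.1 h
    have hyW0 : y ∈ W0 := hyB'.1
    have hyF : y ∈ M.closure W := by
      rw [hWbas.closure_eq_closure]
      exact M.subset_closure F hFE (M.subset_closure W0 hW0i.subset_ground hyW0)
    have h2 : M.closure (D ∪ (W ∩ B')) = M.closure ((X i ∩ B) ∪ (W ∩ B')) := by
      rw [← closure_union_closure_left_eq, hD.closure_eq_closure,
        ← (hBX i).closure_eq_closure, closure_union_closure_left_eq]
    have h3 : (X i ∩ B) ∪ (W ∩ B') ⊆ W0 \ {y} := by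
      rintro x (⟨hx1, hx2⟩ | ⟨hxW, hxB'⟩)
      · refine ⟨mem_iUnion.2 ⟨i, hx1, hx2⟩, fun hxy => hyB'.2 ?_⟩
        rw [mem_singleton_iff] at hxy
        exact hxy ▸ hx1
      · refine ⟨hxB'.1, fun hxy => hyW ?_⟩
        rw [mem_singleton_iff] at hxy
        exact hxy ▸ hxW
    have hycl : y ∈ M.closure (W0 \ {y}) := by
      have h1 := M.closure_subset_closure hWDB' hyF
      rw [h2] at h1
      exact M.closure_subset_closure h3 h1
    exact hW0i.notMem_closure_sdiff_of_mem hyW0 hycl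
  exact hWind.subset (union_subset (hLD.trans hDW) hB'W)

/-- For a pairwise disjoint family `X` of subsets of the ground set
of `M`, the following are equivalent : (1) `X` is skew in `M`; (2) the restriction of
`M` to the union of `X` is the direct sum of the restrictions `M ↾ X i`;
(3) every circuit of `M` contained in the union of `X` is contained in some `X i`. -/

theorem isSkewFamily_iff_restrict_eq_disjointSigma_iff_forall_circuit
    (M : Matroid α) (X : ι → Set α) (hXE : ∀ i, X i ⊆ M.E)
    (hdj : Pairwise (Function.onFun Disjoint X)) :
    (M.IsSkewFamily X ↔
      M ↾ (⋃ i, X i) = Matroid.disjointSigma (fun i ↦ M ↾ X i)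
        (by simpa [Function.onFun] using hdj)) ∧
    (M.IsSkewFamily X ↔ ∀ C, M.Circuit C → C ⊆ ⋃ i, X i → ∃ i, C ⊆ X i) := by
  have h13 : M.IsSkewFamily X → ∀ C, M.Circuit C → C ⊆ ⋃ i, X i → ∃ i, C ⊆ X i := by
    rintro ⟨⟨B, hBind, hBbas⟩, -⟩ C hC hCsub
    by_contra hnot
    push_neg at hnot
    obtain ⟨e, heC⟩ : C.Nonempty :=
      nonempty_iff_ne_empty.2 fun h => hC.2.1 (h ▸ M.empty_indep)
    obtain ⟨i, hei⟩ := mem_iUnion.1 (hCsub heC)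
    have hLss : C ∩ X i ⊂ C := by
      refine inter_subset_left.ssubset_of_ne fun h => hnot i fun x hx => ?_
      rw [← h] at hx
      exact hx.2
    have hLind : M.Indep (C ∩ X i) := hC.2.2 _ hLss
    have hI := M.skew_aux X hXE hdj hBind hBbas i hLind inter_subset_right
    set B' : Set α := (⋃ k, X k ∩ B) \ X i with hB'def
    have hB'Xi : ∀ x ∈ B', x ∉ X i := fun x hx => hx.2
    have heCe : e ∈ M.closure (C \ {e}) := by
      by_contra h
      have hCe : M.Indep (C \ {e}) := hC.2.2 _ (sdiff_singleton_ssubset.2 heC)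
      have hins := (hCe.insert_indep_iff).2 (Or.inl ⟨hC.1 heC, h⟩)
      rw [insert_diff_singleton, insert_eq_self.2 heC] at hins
      exact hC.2.1 hins
    have hsub2 : C \ {e} ⊆ ((C ∩ X i) \ {e}) ∪ M.closure B' := by
      rintro x ⟨hxC, hxe⟩
      obtain ⟨k, hk⟩ := mem_iUnion.1 (hCsub hxC)
      by_cases hki : k = i
      · exact Or.inl ⟨⟨hxC, hki ▸ hk⟩, hxe⟩
      refine Or.inr ?_
      have hBk' : X k ∩ B ⊆ B' := by
        refine subset_diff.2 ⟨subset_iUnion (fun m => X m ∩ B) k, ?_⟩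
        exact (hdj hki).mono_left inter_subset_left
      exact ((hBbas k).subset_closure.trans (M.closure_subset_closure hBk')) hk
    have hmem : e ∈ M.closure (((C ∩ X i) ∪ B') \ {e}) := by
      have h1 := M.closure_subset_closure hsub2 heCe
      rw [closure_union_closure_right_eq] at h1
      refine M.closure_subset_closure ?_ h1
      rintro x (⟨hx1, hx2⟩ | hx2)
      · exact ⟨Or.inl hx1, hx2⟩
      · refine ⟨Or.inr hx2, fun h => ?_⟩
        rw [mem_singleton_iff] at h
        exact hx2.2 (h ▸ hei)
    exact hI.notMem_closure_sdiff_of_mem (Or.inl ⟨heC, hei⟩) hmem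
  have h32 : (∀ C, M.Circuit C → C ⊆ ⋃ i, X i → ∃ i, C ⊆ X i) →
      M ↾ (⋃ i, X i) = Matroid.disjointSigma (fun i ↦ M ↾ X i)
        (by simpa [Function.onFun] using hdj) := by
    intro h3
    refine ext_indep (by simp) ?_
    intro I hIsub
    rw [restrict_ground_eq] at hIsub
    rw [restrict_indep_iff, disjointSigma_indep_iff]
    simp only [restrict_indep_iff, restrict_ground_eq]
    constructor
    · rintro ⟨hI, -⟩
      exact ⟨fun i => ⟨hI.subset inter_subset_left, inter_subset_right⟩, by simpa using hIsub⟩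
    rintro ⟨h1, -⟩
    refine ⟨?_, hIsub⟩
    by_contra hdep
    obtain ⟨C, hCI, hC⟩ :=
      M.exists_circuit_subset_aux (hIsub.trans (iUnion_subset hXE)) hdep
    obtain ⟨i, hCi⟩ := h3 C hC (hCI.trans hIsub)
    exact hC.2.1 ((h1 i).1.subset (subset_inter hCI hCi))
  have h21 : M ↾ (⋃ i, X i) = Matroid.disjointSigma (fun i ↦ M ↾ X i)
        (by simpa [Function.onFun] using hdj) → M.IsSkewFamily X := by
    intro h2
    choose Bk hBk using fun k => M.exists_isBasis (X k) (hXE k)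
    set B : Set α := ⋃ k, Bk k with hBdef
    have hBXk : ∀ k, X k ∩ B = Bk k := by
      intro k
      ext x
      constructor
      · rintro ⟨hx1, hx2⟩
        obtain ⟨j, hj⟩ := mem_iUnion.1 hx2
        rcases eq_or_ne j k with rfl | hne
        · exact hj
        · exact absurd rfl ((hdj hne).ne_of_mem ((hBk j).subset hj) hx1)
      · intro hx
        exact ⟨(hBk k).subset hx, mem_iUnion.2 ⟨k, hx⟩⟩
    have hBind : M.Indep B := by
      have hres : (M ↾ ⋃ i, X i).Indep B := by
        rw [h2, disjointSigma_indep_iff]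
        simp only [restrict_indep_iff, restrict_ground_eq]
        refine ⟨fun i => ⟨?_, inter_subset_right⟩, iUnion_mono fun k => (hBk k).subset⟩
        rw [inter_comm, hBXk i]
        exact (hBk i).indep
      exact hres.of_restrict
    refine ⟨⟨B, hBind, fun i => ?_⟩, fun i j hij => by
      rw [(hdj hij).inter_eq]; exact empty_subset _⟩
    rw [hBXk i]
    exact hBk i
  exact ⟨⟨fun h => h32 (h13 h), h21⟩, ⟨h13, fun h3 => h21 (h32 h3)⟩⟩
end Matroid
end

section
/- Let X and Y be subsets of the ground set of a matroid M. If I and I' are bases for X in M, and J and J' are bases for Y in M, then |I ∩ J| + n_M(I ∪ J) = |I' ∩ J'| + n_M(I' ∪ J'), where cardinalities and nullities are valued in ℕ∞ = ℕ ∪ {∞}. (Hence the local connectivity ⊓_M(X,Y) = |I ∩ J| + n_M(I ∪ J) is well-defined, independent of the choice of bases.) -/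
open Set

namespace Matroid

variable {α : Type*} {ι : Type*}

private lemma eRank_eq_encard_of_base' (M : Matroid α) {B : Set α} (hB : M.IsBase B) :
    M.eRank' = B.encard := by
  rw [eRank', eRk']
  apply le_antisymm
  · refine iSup_le fun ⟨I, hI, _⟩ => ?_
    obtain ⟨B', hB', hIB'⟩ := hI.exists_isBase_superset
    exact (Set.encard_le_encard hIB').trans_eq
      (hB'.isBasis_ground.encard_eq_encard hB.isBasis_ground)
  · exact le_iSup_of_le ⟨B, hB.indep, hB.subset_ground⟩ le_rfl

private lemma nullity_eq_encard_diff' (M : Matroid α) {B S : Set α} (hB : M.IsBasis' B S) :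
    M.nullity S = (S \ B).encard := by
  have hBb : (M ↾ S).IsBase B := isBase_restrict_iff'.mpr hB
  have hd : (M ↾ S)✶.IsBase (S \ B) := by
    simpa using hBb.compl_isBase_dual
  exact eRank_eq_encard_of_base' _ hd

/-- If `B` is a base whose intersection with `X` is a basis of `X`, then the part of the
complement of `B` outside `X` is a basis of `M.E \ X` in the dual. -/
private lemma factF {M : Matroid α} {B X : Set α} (hB : M.IsBase B) (hX : X ⊆ M.E)
    (hBX : M.IsBasis (B ∩ X) X) : M✶.IsBasis ((M.E \ X) \ B) (M.E \ X) := by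
  have hBE : B ⊆ M.E := hB.subset_ground
  have hind : M✶.Indep ((M.E \ X) \ B) :=
    hB.compl_isBase_dual.indep.subset (fun x hx => ⟨hx.1.1, hx.2⟩)
  refine hind.isBasis_of_forall_insert (diff_subset) ?_
  rintro e ⟨heEX, heB⟩
  have heBmem : e ∈ B := by
    by_contra h
    exact heB ⟨heEX, h⟩
  rw [dep_iff]
  refine ⟨fun hins => ?_, insert_subset (by simpa using heEX.1) (hind.subset_ground)⟩
  obtain ⟨-, B₂, hB₂, hdisj⟩ := dual_indep_iff_exists'.1 hins
  have heX : e ∉ X := heEX.2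
  have hB₂sub : B₂ ⊆ X ∪ (B \ {e}) := by
    intro b hb
    have hbE : b ∈ M.E := hB₂.subset_ground hb
    have hbe : b ≠ e := by
      rintro rfl
      exact (disjoint_left.1 hdisj (mem_insert _ _)) hb
    by_cases hbX : b ∈ X
    · exact Or.inl hbX
    by_cases hbB : b ∈ B
    · exact Or.inr ⟨hbB, hbe⟩
    exact (disjoint_right.1 hdisj hb (mem_insert_of_mem _ ⟨⟨hbE, hbX⟩, hbB⟩)).elim
  have hsub : B ∩ X ⊆ B \ {e} := fun x hx => ⟨hx.1, fun hxe => heX (hxe ▸ hx.2)⟩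
  have hcl : M.E ⊆ M.closure (B \ {e}) := by
    rw [← hB₂.closure_eq]
    refine (M.closure_subset_closure hB₂sub).trans (Eq.subset ?_)
    calc M.closure (X ∪ (B \ {e}))
        = M.closure (M.closure X ∪ (B \ {e})) := by rw [closure_union_closure_left_eq]
      _ = M.closure (M.closure (B ∩ X) ∪ (B \ {e})) := by rw [hBX.closure_eq_closure]
      _ = M.closure ((B ∩ X) ∪ (B \ {e})) := by rw [closure_union_closure_left_eq]
      _ = M.closure (B \ {e}) := by rw [union_eq_self_of_subset_left hsub]
  exact hB.indep.notMem_closure_diff_of_mem heBmem (hcl (hBE heBmem))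

/-- Key lemma : if `I` is a basis of `X`, `K ⊆ J` is disjoint from `X` and `I ∪ K` is a
basis of `I ∪ J`, then `K` is a base of `(M / X) ↾ J`. -/
private lemma base_contract_restrict {M : Matroid α} {X J I K : Set α}
    (hXE : X ⊆ M.E) (hJE : J ⊆ M.E) (hI : M.IsBasis I X) (hKJ : K ⊆ J)
    (hKX : Disjoint K X) (hIK : M.IsBasis (I ∪ K) (I ∪ J)) :
    ((M.contract' X) ↾ J).IsBase K := by
  have hIE : I ⊆ M.E := hI.indep.subset_ground
  -- groundwork on the contraction
  have hgr : (M✶ ↾ (M.E \ X)) = M✶.delete' X := by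
    rw [delete']; rfl
  have hindep_iff : ∀ A : Set α, (M.contract' X).Indep A ↔
      (A ⊆ M.E \ X ∧ ∃ D, M✶.IsBasis D (M.E \ X) ∧ Disjoint A D) := by
    intro A
    rw [contract', ← hgr, dual_indep_iff_exists']
    simp only [restrict_ground_eq]
    refine and_congr_right fun hA => ?_
    constructor
    · rintro ⟨D, hD, hdisj⟩
      exact ⟨D, (isBase_restrict_iff (show M.E \ X ⊆ M✶.E from diff_subset)).1 hD, hdisj⟩
    · rintro ⟨D, hD, hdisj⟩
      exact ⟨D, (isBase_restrict_iff (show M.E \ X ⊆ M✶.E from diff_subset)).2 hD, hdisj⟩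
  -- step 1 : K is independent in the contraction
  have hKind : (M.contract' X).Indep K := by
    obtain ⟨B₂, hB₂, hsubB₂⟩ := hIK.indep.subset_isBasis_of_subset
      (union_subset_union_right I hKJ : I ∪ K ⊆ I ∪ J) (union_subset hIE hJE)
    have hB₂IJ : M.IsBasis B₂ (X ∪ J) := by
      refine hB₂.indep.isBasis_of_forall_insert (hB₂.subset.trans
        (union_subset_union_left J hI.subset)) ?_
      rintro e ⟨heXJ, heB₂⟩
      have heE : e ∈ M.E := by rcases heXJ with h | h; exacts [hXE h, hJE h]
      rw [dep_iff, insert_subset_iff]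
      refine ⟨fun hins => ?_, heE, hB₂.indep.subset_ground⟩
      rcases heXJ with heX | heJ
      · -- e ∈ X : insert e I indep, contradiction with I basis of X
        have hIe : M.Indep (insert e I) :=
          hins.subset (insert_subset_insert (subset_union_left.trans hsubB₂))
        have : e ∈ I := hI.mem_of_insert_indep heX hIe
        exact heB₂ (hsubB₂ (Or.inl this))
      · exact heB₂ (hB₂.mem_of_insert_indep (Or.inr heJ) hins)
    obtain ⟨B, hB, hBeq⟩ := hB₂IJ.exists_isBase
    have hKB : K ⊆ B := fun x hx => by
      have := hsubB₂ (Or.inr hx); rw [hBeq] at this; exact this.1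
    have hBX : B ∩ X = I := by
      apply subset_antisymm
      · intro x hx
        have hxB₂ : x ∈ B₂ := by rw [hBeq]; exact ⟨hx.1, Or.inl hx.2⟩
        have hIe : M.Indep (insert x I) :=
          hB₂.indep.subset (insert_subset hxB₂ (subset_union_left.trans hsubB₂))
        exact hI.mem_of_insert_indep hx.2 hIe
      · intro x hx
        refine ⟨?_, hI.subset hx⟩
        have : x ∈ B₂ := hsubB₂ (Or.inl hx)
        rw [hBeq] at this; exact this.1
    have hD := factF hB hXE (by rw [hBX]; exact hI)
    refine (hindep_iff K).2 ⟨?_, (M.E \ X) \ B, hD, ?_⟩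
    · exact fun x hx => ⟨hJE (hKJ hx), disjoint_left.1 hKX hx⟩
    · exact disjoint_left.mpr fun x hx hx' => hx'.2 (hKB hx)
  -- step 2 : maximality
  rw [isBase_restrict_iff']
  refine ⟨⟨hKind, hKJ⟩, fun A ⟨hAind, hAJ⟩ hKA => ?_⟩
  obtain ⟨hAE, D₂, hD₂, hdisj₂⟩ := (hindep_iff A).1 hAind
  have hsubEI : M.E \ X ⊆ M.E \ I := diff_subset_diff_right hI.subset
  obtain ⟨D₃, hD₃, hD₂₃⟩ := hD₂.indep.subset_isBasis_of_subset
    (hD₂.subset.trans hsubEI) (show M.E \ I ⊆ M✶.E from diff_subset)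
  obtain ⟨Dh, hDh, hDheq⟩ := hD₃.exists_isBase
  have hfact := factF (M := M✶) hDh (show M.E \ I ⊆ M✶.E from diff_subset)
    (by rw [← hDheq]; exact hD₃)
  rw [dual_dual] at hfact
  have hEdiff : M✶.E \ (M.E \ I) = I := by
    rw [dual_ground, diff_diff_cancel_left hIE]
  rw [hEdiff] at hfact
  have hIDh : I \ Dh = I :=
    hfact.eq_of_subset_indep hI.indep diff_subset rfl.subset
  have hIdisj : Disjoint I Dh := by
    rw [← hIDh]; exact disjoint_sdiff_left
  have hADh : Disjoint A Dh := by
    refine disjoint_left.mpr fun x hxA hxDh => ?_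
    by_cases hxD₃ : x ∈ D₃
    · by_cases hxD₂ : x ∈ D₂
      · exact disjoint_left.1 hdisj₂ hxA hxD₂
      · have hxEX : x ∈ M.E \ X := hAE hxA
        have hins : M✶.Indep (insert x D₂) :=
          hD₃.indep.subset (insert_subset hxD₃ hD₂₃)
        exact hxD₂ (hD₂.mem_of_insert_indep hxEX hins)
    · have : x ∈ D₃ := by
        rw [hDheq]
        refine ⟨hxDh, hDh.subset_ground hxDh, fun hxI => disjoint_left.1 hIdisj hxI hxDh⟩
      exact hxD₃ this
  have hBase : M.IsBase (M.E \ Dh) := hDh.compl_isBase_of_dual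
  have hIAind : M.Indep (I ∪ A) := hBase.indep.subset (union_subset
    (fun x hx => ⟨hIE hx, disjoint_left.1 hIdisj hx⟩)
    (fun x hx => ⟨(hAE hx).1, disjoint_left.1 hADh hx⟩))
  have hEq : I ∪ K = I ∪ A := hIK.eq_of_subset_indep hIAind
    (union_subset_union_right I hKA) (union_subset_union_right I hAJ)
  intro x hxA
  have : x ∈ I ∪ K := hEq ▸ Or.inr hxA
  rcases this with hxI | hxK
  · exact absurd (hI.subset hxI) ((hAE hxA).2)
  · exact hxK

private lemma aux_encard_inter (M : Matroid α) {X J I I' : Set α}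
    (hI : M.IsBasis I X) (hI' : M.IsBasis I' X) (hJE : J ⊆ M.E) :
    (I ∩ J).encard + M.nullity (I ∪ J) = (I' ∩ J).encard + M.nullity (I' ∪ J) := by
  have key : ∀ I₀ : Set α, M.IsBasis I₀ X →
      ∃ K, ((M.contract' X) ↾ J).IsBase K ∧
        (I₀ ∩ J).encard + M.nullity (I₀ ∪ J) = (J \ K).encard := by
    intro I₀ hI₀
    have hI₀E : I₀ ⊆ M.E := hI₀.indep.subset_ground
    obtain ⟨B₁, hB₁, hIB₁⟩ := hI₀.indep.subset_isBasis_of_subset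
      (subset_union_left : I₀ ⊆ I₀ ∪ J) (union_subset hI₀E hJE)
    set K := B₁ \ I₀ with hK
    have hB₁eq : I₀ ∪ K = B₁ := union_diff_cancel hIB₁
    have hKJ : K ⊆ J := fun x hx => (hB₁.subset hx.1).elim (fun h => absurd h hx.2) id
    have hKX : Disjoint K X := by
      refine disjoint_left.mpr fun x hx hxX => ?_
      have : M.Indep (insert x I₀) := hB₁.indep.subset (insert_subset hx.1 hIB₁)
      exact hx.2 (hI₀.mem_of_insert_indep hxX this)
    have hKI : Disjoint K I₀ := disjoint_sdiff_left
    refine ⟨K, base_contract_restrict hI₀.subset_ground hJE hI₀ hKJ hKX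
      (hB₁eq ▸ hB₁), ?_⟩
    have hnull : M.nullity (I₀ ∪ J) = ((I₀ ∪ J) \ B₁).encard :=
      nullity_eq_encard_diff' M hB₁.isBasis'
    have hdiffeq : (I₀ ∪ J) \ B₁ = J \ (I₀ ∪ K) := by
      rw [← hB₁eq]
      ext x
      simp only [mem_diff, mem_union, not_or]
      tauto
    have hdisj : Disjoint (I₀ ∩ J) (J \ (I₀ ∪ K)) :=
      disjoint_left.mpr fun x hx hx' => hx'.2 (Or.inl hx.1)
    have hseteq : (I₀ ∩ J) ∪ (J \ (I₀ ∪ K)) = J \ K := by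
      ext x
      simp only [mem_union, mem_inter_iff, mem_diff, not_or]
      constructor
      · rintro (⟨hxI, hxJ⟩ | ⟨hxJ, hxI, hxK⟩)
        · exact ⟨hxJ, fun hxK => disjoint_left.1 hKI hxK hxI⟩
        · exact ⟨hxJ, hxK⟩
      · rintro ⟨hxJ, hxK⟩
        by_cases hxI : x ∈ I₀
        · exact Or.inl ⟨hxI, hxJ⟩
        · exact Or.inr ⟨hxJ, hxI, hxK⟩
    rw [hnull, hdiffeq, ← encard_union_eq hdisj, hseteq]
  obtain ⟨K, hKbase, hKeq⟩ := key I hI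
  obtain ⟨K', hK'base, hK'eq⟩ := key I' hI'
  rw [hKeq, hK'eq]
  have h1 : ((M.contract' X) ↾ J)✶.IsBase (J \ K) := by simpa using hKbase.compl_isBase_dual
  have h2 : ((M.contract' X) ↾ J)✶.IsBase (J \ K') := by simpa using hK'base.compl_isBase_dual
  rw [← eRank_eq_encard_of_base' _ h1, ← eRank_eq_encard_of_base' _ h2]

/-- The quantity `|I ∩ J| + n (I ∪ J)` is independent of the choice of
bases `I` for `X` and `J` for `Y`; hence local connectivity is well-defined. -/
theorem encard_inter_add_nullity_union_eq (M : Matroid α) {X Y I I' J J' : Set α}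
    (hI : M.IsBasis I X) (hI' : M.IsBasis I' X) (hJ : M.IsBasis J Y) (hJ' : M.IsBasis J' Y) :
    (I ∩ J).encard + M.nullity (I ∪ J) = (I' ∩ J').encard + M.nullity (I' ∪ J') := by
  have hJE : J ⊆ M.E := hJ.indep.subset_ground
  have hI'E : I' ⊆ M.E := hI'.indep.subset_ground
  calc (I ∩ J).encard + M.nullity (I ∪ J)
      = (I' ∩ J).encard + M.nullity (I' ∪ J) := aux_encard_inter M hI hI' hJE
    _ = (J ∩ I').encard + M.nullity (J ∪ I') := by rw [inter_comm, union_comm]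
    _ = (J' ∩ I').encard + M.nullity (J' ∪ I') := aux_encard_inter M hJ hJ' hI'E
    _ = (I' ∩ J').encard + M.nullity (I' ∪ J') := by rw [inter_comm, union_comm]
end Matroid
end

section
/- Let X and Y be subsets of the ground set of a matroid M. Then ⊓_M(X,Y) ≥ r_M(X ∩ Y) in ℕ∞ = ℕ ∪ {∞}. Moreover, if ⊓_M(X,Y) < ∞, then equality ⊓_M(X,Y) = r_M(X ∩ Y) holds if and only if (X,Y) is a modular pair in M. -/
open Set

namespace Matroid

variable {α : Type*} {ι : Type*}

section aux

variable {M : Matroid α} {I I' J K B X Y : Set α}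

lemma encard_le_eRk (hA : M.Indep I) (hAX : I ⊆ X) : I.encard ≤ M.eRk' X :=
  le_iSup (fun I : {I : Set α // M.Indep I ∧ I ⊆ X} => I.1.encard) ⟨I, hA, hAX⟩

lemma IsBasis.encard_le (hK : M.IsBasis K X) (hA : M.Indep I) (hAX : I ⊆ X) :
    I.encard ≤ K.encard := by
  by_contra hlt
  push_neg at hlt
  obtain ⟨e, he, hins⟩ := hK.indep.augment hA hlt
  have := hK.eq_of_subset_indep hins (subset_insert _ _)
    (insert_subset (hAX he.1) hK.subset)
  exact he.2 (this ▸ mem_insert _ _)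

lemma IsBasis.eRk_eq (hK : M.IsBasis K X) : M.eRk' X = K.encard := by
  refine le_antisymm (iSup_le fun ⟨A, hA, hAX⟩ => hK.encard_le hA hAX) ?_
  exact encard_le_eRk hK.indep hK.subset

lemma IsBase.eRank_eq (hB : M.IsBase B) : M.eRank' = B.encard :=
  hB.isBasis_ground.eRk_eq

lemma IsBasis.nullity_eq (hB : M.IsBasis B X) : M.nullity X = (X \ B).encard := by
  have h1 : (M ↾ X).IsBase B := hB.isBase_restrict
  have h2 : (M ↾ X)✶.IsBase (X \ B) := h1.compl_isBase_dual
  exact h2.eRank_eq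

lemma Indep.nullity_eq_zero (hI : M.Indep I) : M.nullity I = 0 := by
  rw [hI.isBasis_self.nullity_eq, diff_self, encard_empty]

/-- Bases of the same set can be exchanged against a set `K` outside the closure. -/
lemma basis_exchange_indep_union (hI : M.IsBasis I X) (hI' : M.IsBasis I' X)
    (hKE : K ⊆ M.E) (hKcl : Disjoint K (M.closure X)) (h : M.Indep (I ∪ K)) :
    M.Indep (I' ∪ K) := by
  set N := M ↾ (M.closure X ∪ K) with hN
  have hXcl : X ⊆ M.closure X := M.subset_closure X hI.subset_ground
  have hI'N : N.Indep I' :=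
    restrict_indep_iff.2 ⟨hI'.indep, (hI'.subset.trans hXcl).trans subset_union_left⟩
  obtain ⟨B'', hB'', hsub⟩ := hI'N.exists_isBase_superset
  have hB''M : M.Indep B'' := (restrict_indep_iff.1 hB''.indep).1
  have hB''sub : B'' ⊆ M.closure X ∪ K := hB''.subset_ground
  have hKB : K ⊆ B'' := by
    intro e heK
    by_contra heB
    have hnotN : ¬ N.Indep (insert e B'') := by
      intro hcon
      have := hB''.eq_of_subset_indep hcon (subset_insert _ _)
      exact heB (this ▸ mem_insert _ _)
    have hnotM : ¬ M.Indep (insert e B'') := fun hcon =>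
      hnotN (restrict_indep_iff.2 ⟨hcon,
        insert_subset (Or.inr heK) hB''sub⟩)
    have hecl : e ∈ M.closure B'' := by
      have h' : ¬ (e ∈ M.E \ M.closure B'') := fun h' =>
        hnotM ((hB''M.insert_indep_iff_of_notMem heB).2 h')
      by_contra hecl
      exact h' ⟨hKE heK, hecl⟩
    have heI : e ∉ I := fun heI =>
      hKcl.ne_of_mem heK (hXcl (hI.subset heI)) rfl
    have hsub2 : B'' ⊆ M.closure X ∪ (K \ {e}) := by
      intro x hx
      rcases hB''sub hx with h1 | h1
      · exact Or.inl h1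
      · exact Or.inr ⟨h1, fun hxe => heB (hxe ▸ hx)⟩
    have hclsub : M.closure B'' ⊆ M.closure ((I ∪ K) \ {e}) := by
      have h3 : M.closure (M.closure X ∪ (K \ {e})) = M.closure (I ∪ (K \ {e})) := by
        rw [← hI.closure_eq_closure, closure_union_closure_left_eq]
      have h4 : I ∪ (K \ {e}) = (I ∪ K) \ {e} := by
        rw [union_diff_distrib, diff_singleton_eq_self heI]
      calc M.closure B'' ⊆ M.closure (M.closure X ∪ (K \ {e})) :=
            M.closure_subset_closure hsub2
        _ = M.closure ((I ∪ K) \ {e}) := by rw [h3, h4]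
    exact h.notMem_closure_diff_of_mem (Or.inr heK) (hclsub hecl)
  exact hB''M.subset (union_subset hsub hKB)

/-- The local connectivity value does not depend on the choice of basis of `X`. -/
lemma localconn_basis_invariant (hI : M.IsBasis I X) (hI' : M.IsBasis I' X) {Y : Set α}
    (hJ : M.IsBasis J Y) :
    (I ∩ J).encard + M.nullity (I ∪ J) = (I' ∩ J).encard + M.nullity (I' ∪ J) := by
  set D := M.closure X with hD
  set S := J \ D with hS
  have hXE : X ⊆ M.E := hI.subset_ground
  have hXD : X ⊆ D := M.subset_closure X hXE
  have hSE : S ⊆ M.E := diff_subset.trans hJ.indep.subset_ground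
  have hSD : Disjoint S D := disjoint_sdiff_left
  obtain ⟨B, hB, hIB⟩ := hI.indep.subset_isBasis_of_subset
    (subset_union_left : I ⊆ I ∪ S) (union_subset hI.indep.subset_ground hSE)
  set B₁ := B \ I with hB₁
  have hBeq : B = I ∪ B₁ := (union_diff_cancel hIB).symm
  have hB₁S : B₁ ⊆ S := by
    intro x hx
    rcases hB.subset hx.1 with h1 | h1
    · exact absurd h1 hx.2
    · exact h1
  have hB₁D : Disjoint B₁ D := hSD.mono_left hB₁S
  have hScl : S ⊆ M.closure (D ∪ B₁) := by
    have h1 : M.closure (D ∪ B₁) = M.closure (I ∪ B₁) := by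
      rw [hD, ← hI.closure_eq_closure, closure_union_closure_left_eq]
    rw [h1, ← hBeq, hB.closure_eq_closure]
    exact subset_union_right.trans (M.subset_closure _ hB.subset_ground)
  have hI'B₁ : M.Indep (I' ∪ B₁) :=
    basis_exchange_indep_union hI hI' (hB₁S.trans hSE)
      (hSD.mono_left hB₁S) (hBeq ▸ hB.indep)
  -- the common computation for any basis `I₀` of `X` with `I₀ ∪ B₁` independent
  have aux : ∀ I₀, M.IsBasis I₀ X → M.Indep (I₀ ∪ B₁) →
      (I₀ ∩ J).encard + M.nullity (I₀ ∪ J) = (J ∩ D).encard + (S \ B₁).encard := by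
    intro I₀ hI₀ hind
    have hI₀D : I₀ ⊆ D := hI₀.subset.trans hXD
    have hI₀B₁ : Disjoint I₀ B₁ := hB₁D.symm.mono_left hI₀D
    have hcleq : M.closure (I₀ ∪ B₁) = M.closure (D ∪ B₁) := by
      rw [hD, ← hI₀.closure_eq_closure, closure_union_closure_left_eq]
    have hDcl : D ∪ B₁ ⊆ M.closure (D ∪ B₁) :=
      M.subset_closure _ (union_subset (M.closure_subset_ground X) (hB₁S.trans hSE))
    have hBasis : M.IsBasis (I₀ ∪ B₁) (I₀ ∪ J) := by
      refine hind.isBasis_of_subset_of_subset_closure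
        (union_subset_union_right _ (hB₁S.trans diff_subset)) ?_
      rw [hcleq]
      refine union_subset (hI₀D.trans (subset_union_left.trans hDcl)) ?_
      intro x hx
      by_cases hxD : x ∈ D
      · exact hDcl (Or.inl hxD)
      · exact hScl ⟨hx, hxD⟩
    have hnul : M.nullity (I₀ ∪ J) = ((I₀ ∪ J) \ (I₀ ∪ B₁)).encard := hBasis.nullity_eq
    have hdiff : (I₀ ∪ J) \ (I₀ ∪ B₁) = ((J ∩ D) \ I₀) ∪ (S \ B₁) := by
      ext x
      have h1 : x ∈ B₁ → x ∉ D := fun h hD' => hB₁D.ne_of_mem h hD' rfl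
      have h2 : x ∈ I₀ → x ∈ D := fun h => hI₀D h
      have h3 : x ∈ B₁ → x ∈ J := fun h => (hB₁S h).1
      simp only [hS, mem_diff, mem_union, mem_inter_iff]
      tauto
    have hdisj : Disjoint ((J ∩ D) \ I₀) (S \ B₁) :=
      hSD.symm.mono (diff_subset.trans inter_subset_right) diff_subset
    have hint : I₀ ∩ J = (J ∩ D) ∩ I₀ := by
      ext x
      have h2 : x ∈ I₀ → x ∈ D := fun h => hI₀D h
      simp only [mem_inter_iff]
      tauto
    rw [hnul, hdiff, encard_union_eq hdisj, hint, ← add_assoc,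
      add_comm (((J ∩ D)) ∩ I₀).encard, encard_diff_add_encard_inter]
  rw [aux I hI (hBeq ▸ hB.indep), aux I' hI' hI'B₁]

end aux

/-- The local connectivity of `X` and `Y` (computed as
`|I ∩ J| + n (I ∪ J)` for bases `I` of `X` and `J` of `Y`) is at least `r (X ∩ Y)`,
and if it is finite, then equality holds iff `(X, Y)` is a modular pair in `M`. -/
theorem eRk_inter_le_eLocalConn (M : Matroid α) {X Y I J : Set α}
    (hI : M.IsBasis I X) (hJ : M.IsBasis J Y) :
    M.eRk' (X ∩ Y) ≤ (I ∩ J).encard + M.nullity (I ∪ J) ∧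
      ((I ∩ J).encard + M.nullity (I ∪ J) < ⊤ →
        ((I ∩ J).encard + M.nullity (I ∪ J) = M.eRk' (X ∩ Y) ↔ M.IsModularPair X Y)) := by
  have hXE : X ⊆ M.E := hI.subset_ground
  have hYE : Y ⊆ M.E := hJ.subset_ground
  obtain ⟨K, hK⟩ := M.exists_isBasis (X ∩ Y) (inter_subset_left.trans hXE)
  obtain ⟨I', hI', hKI'⟩ :=
    hK.indep.subset_isBasis_of_subset (hK.subset.trans inter_subset_left) hXE
  obtain ⟨J', hJ', hKJ'⟩ :=
    hK.indep.subset_isBasis_of_subset (hK.subset.trans inter_subset_right) hYE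
  have comm : ∀ (A B : Set α),
      (A ∩ B).encard + M.nullity (A ∪ B) = (B ∩ A).encard + M.nullity (B ∪ A) := by
    intro A B; rw [inter_comm, union_comm]
  have hchain : (I ∩ J).encard + M.nullity (I ∪ J)
      = (I' ∩ J').encard + M.nullity (I' ∪ J') := by
    rw [localconn_basis_invariant hI hI' hJ, comm,
      localconn_basis_invariant hJ hJ' hI', comm]
  have habs : ∀ L, M.Indep L → K ⊆ L → ∀ e, e ∈ L → e ∈ X ∩ Y → e ∈ K := by
    intro L hL hKL e heL heXY
    by_contra heK
    have hins : M.Indep (insert e K) := hL.subset (insert_subset heL hKL)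
    exact ((hK.indep.insert_indep_iff_of_notMem heK).1 hins).2 (hK.subset_closure heXY)
  have hI'J' : I' ∩ J' = K := by
    refine Subset.antisymm (fun e he => ?_) (subset_inter hKI' hKJ')
    exact habs I' hI'.indep hKI' e he.1 ⟨hI'.subset he.1, hJ'.subset he.2⟩
  have heRk : M.eRk' (X ∩ Y) = K.encard := hK.eRk_eq
  have hge : M.eRk' (X ∩ Y) ≤ (I ∩ J).encard + M.nullity (I ∪ J) := by
    rw [heRk, hchain, hI'J']
    exact le_self_add
  refine ⟨hge, fun hfin => ⟨fun heq => ?_, fun hmod => ?_⟩⟩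
  · have hKfin : K.encard ≠ ⊤ := by
      rw [← heRk, ← heq]; exact hfin.ne
    have hnul : M.nullity (I' ∪ J') = 0 := by
      refine WithTop.add_left_cancel hKfin ?_
      calc K.encard + M.nullity (I' ∪ J')
          = (I' ∩ J').encard + M.nullity (I' ∪ J') := by rw [hI'J']
        _ = (I ∩ J).encard + M.nullity (I ∪ J) := hchain.symm
        _ = K.encard + 0 := by rw [heq, heRk, add_zero]
    obtain ⟨B₂, hB₂⟩ := M.exists_isBasis (I' ∪ J')
      (union_subset hI'.indep.subset_ground hJ'.indep.subset_ground)
    have hemp : (I' ∪ J') \ B₂ = ∅ := by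
      rw [← encard_eq_zero, ← hB₂.nullity_eq]; exact hnul
    have hBind : M.Indep (I' ∪ J') := by
      have hsub : I' ∪ J' ⊆ B₂ := diff_eq_empty.1 hemp
      exact (hB₂.subset.antisymm hsub) ▸ hB₂.indep
    have hBX : X ∩ (I' ∪ J') = I' := by
      refine Subset.antisymm (fun e he => ?_) (subset_inter hI'.subset subset_union_left)
      rcases he.2 with h1 | h1
      · exact h1
      · exact hKI' (habs J' hJ'.indep hKJ' e h1 ⟨he.1, hJ'.subset h1⟩)
    have hBY : Y ∩ (I' ∪ J') = J' := by
      refine Subset.antisymm (fun e he => ?_) (subset_inter hJ'.subset subset_union_right)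
      rcases he.2 with h1 | h1
      · exact hKJ' (habs I' hI'.indep hKI' e h1 ⟨hI'.subset h1, he.1⟩)
      · exact h1
    refine ⟨I' ∪ J', hBind, fun Z hZ => ?_⟩
    rcases hZ with rfl | hZ
    · rw [hBX]; exact hI'
    · rw [mem_singleton_iff] at hZ
      subst hZ
      rw [hBY]; exact hJ'
  · obtain ⟨B, hBind, hBbas⟩ := hmod
    have hBX : M.IsBasis (X ∩ B) X := hBbas X (Or.inl rfl)
    have hBY : M.IsBasis (Y ∩ B) Y := hBbas Y (Or.inr rfl)
    have hchain2 : (I ∩ J).encard + M.nullity (I ∪ J)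
        = ((X ∩ B) ∩ (Y ∩ B)).encard + M.nullity ((X ∩ B) ∪ (Y ∩ B)) := by
      rw [localconn_basis_invariant hI hBX hJ, comm,
        localconn_basis_invariant hJ hBY hBX, comm]
    have hnul2 : M.nullity ((X ∩ B) ∪ (Y ∩ B)) = 0 :=
      (hBind.subset (union_subset inter_subset_right inter_subset_right)).nullity_eq_zero
    have hle : (I ∩ J).encard + M.nullity (I ∪ J) ≤ M.eRk' (X ∩ Y) := by
      rw [hchain2, hnul2, add_zero]
      exact encard_le_eRk (hBind.subset (inter_subset_left.trans inter_subset_right))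
        (inter_subset_inter inter_subset_left inter_subset_left)
    exact le_antisymm hle hge
end Matroid
end

section
/- Let M' be a matroid, let e be an element of M', and let M = M' \ e. Then the collection 𝓕_M^{M'} of all flats F of M with e ∈ cl_{M'}(F) is a modular cut of M. -/
open Set

namespace Matroid

variable {α : Type*} {ι : Type*}

private lemma flat_inter_aux {M : Matroid α} {F F' : Set α} (hF : M.IsFlat F) (hF' : M.IsFlat F') :
    M.IsFlat (F ∩ F') := by
  have h := IsFlat.iInter (M := M) (Fs := fun b : Bool => bif b then F else F')
    (by rintro (_ | _) <;> simpa)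
  have he : (⋂ b : Bool, bif b then F else F') = F ∩ F' := by
    ext x; simp [Bool.forall_bool, and_comm]
  rwa [he] at h

private lemma flat_sInter_aux {M : Matroid α} {𝓒 : Set (Set α)} (hne : 𝓒.Nonempty)
    (h : ∀ F ∈ 𝓒, M.IsFlat F) : M.IsFlat (⋂₀ 𝓒) := by
  have : Nonempty 𝓒 := hne.to_subtype
  have h' := IsFlat.iInter (M := M) (Fs := fun F : 𝓒 => F.1) (fun F => h F.1 F.2)
  rwa [sInter_eq_iInter]

/-- If `M = M' \ e`, then the collection of flats of `M` whose closure
in `M'` contains `e` is a modular cut of `M`. -/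
theorem isModularCut_of_deletion (M' : Matroid α) {e : α} (he : e ∈ M'.E) :
    (M'.delete' {e}).IsModularCut
      {F | (M'.delete' {e}).IsFlat F ∧ e ∈ M'.closure F} := by
  set M := M'.delete' {e} with hM
  have hbasis : ∀ ⦃J F : Set α⦄, M.IsBasis J F → M'.closure J = M'.closure F := by
    intro J F h
    rw [hM, delete', isBasis_restrict_iff'] at h
    rw [h.1.closure_eq_closure, closure_inter_ground]
  have hindep : ∀ ⦃B : Set α⦄, M.Indep B → M'.Indep B := by
    intro B hB
    rw [hM, delete', restrict_indep_iff] at hB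
    exact hB.1
  refine ⟨fun F hF => hF.1, fun F F' hF hF' hss => ⟨hF', M'.closure_subset_closure hss hF.2⟩,
    ?_, ?_⟩
  · rintro F F' hF hF' ⟨B, hB, hbas⟩
    have hJ := hbas F (mem_insert _ _)
    have hJ' := hbas F' (mem_insert_of_mem _ rfl)
    have hBi := hindep hB
    have hind : M'.Indep ((F ∩ B) ∪ (F' ∩ B)) :=
      hBi.subset (union_subset inter_subset_right inter_subset_right)
    have h1 : e ∈ M'.closure (F ∩ B) := by rw [hbasis hJ]; exact hF.2
    have h2 : e ∈ M'.closure (F' ∩ B) := by rw [hbasis hJ']; exact hF'.2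
    have h3 : e ∈ M'.closure ((F ∩ B) ∩ (F' ∩ B)) := by
      rw [hind.closure_inter_eq_inter_closure]; exact ⟨h1, h2⟩
    refine ⟨flat_inter_aux hF.1 hF'.1, M'.closure_subset_closure ?_ h3⟩
    exact inter_subset_inter inter_subset_left inter_subset_left
  · rintro 𝓒 h𝓒𝓕 h𝓒inf - ⟨B, hB, hbas⟩
    have hne : 𝓒.Nonempty := h𝓒inf.nonempty
    have hBi := hindep hB
    have hJs : ∀ J ∈ (fun F => F ∩ B) '' 𝓒, J ⊆ B := by
      rintro _ ⟨F, hF, rfl⟩; exact inter_subset_right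
    have hkey := hBi.closure_sInter_eq_biInter_closure_of_forall_subset (hne.image _) hJs
    have hmem : e ∈ M'.closure (⋂₀ ((fun F => F ∩ B) '' 𝓒)) := by
      rw [hkey, mem_iInter₂]
      rintro _ ⟨F, hF, rfl⟩
      rw [hbasis (hbas F hF)]
      exact (h𝓒𝓕 hF).2
    have hsub : ⋂₀ ((fun F => F ∩ B) '' 𝓒) ⊆ ⋂₀ 𝓒 := by
      intro x hx F hF
      exact (hx _ ⟨F, hF, rfl⟩).1
    exact ⟨flat_sInter_aux hne (fun F hF => (h𝓒𝓕 hF).1),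
      M'.closure_subset_closure hsub hmem⟩
end Matroid
end

section
/- Let 𝓕 be a modular cut in a matroid M, and let e be an element not in the ground set of M. Then there is a unique matroid M' with ground set E(M) ∪ {e} such that M' \ e = M and, for every flat F of M, e ∈ cl_{M'}(F) if and only if F ∈ 𝓕. -/
open Set

namespace Matroid

variable {α : Type*} {ι : Type*}

/-! ### Auxiliary machinery for the extension theorem -/

section ExtensionAux

variable {M : Matroid α} {𝓕 : Set (Set α)} {e : α} {I B F X : Set α}

private lemma flat_closure' (M : Matroid α) (X : Set α) : M.IsFlat (M.closure X) := by
  rw [closure_def, sInter_eq_iInter]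
  have hne : {F | M.IsFlat F ∧ X ∩ M.E ⊆ F}.Nonempty := ⟨M.E, M.ground_isFlat, inter_subset_right⟩
  have := hne.to_subtype
  exact IsFlat.iInter fun F => F.2.1

/-- If `B` is a mutual basis for a nonempty family `𝓧`, then `B ∩ ⋂₀ 𝓧` spans `⋂₀ 𝓧`. -/
private lemma sInter_subset_closure_inter (hB : M.Indep B) {𝓧 : Set (Set α)}
    (hne : 𝓧.Nonempty) (hbas : ∀ F ∈ 𝓧, M.IsBasis (F ∩ B) F) :
    ⋂₀ 𝓧 ⊆ M.closure (B ∩ ⋂₀ 𝓧) := by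
  intro z hz
  by_contra hzR
  obtain ⟨F, hF⟩ := hne
  have hDF := hbas F hF
  have hFE : F ⊆ M.E := hDF.subset_ground
  have hzF : z ∈ F := hz F hF
  have hzE : z ∈ M.E := hFE hzF
  have hRE : B ∩ ⋂₀ 𝓧 ⊆ M.E := inter_subset_left.trans hB.subset_ground
  have hzB : z ∉ B := fun h => hzR (M.subset_closure _ hRE ⟨h, hz⟩)
  have hRind : M.Indep (B ∩ ⋂₀ 𝓧) := hB.subset inter_subset_left
  have hzRind : M.Indep (insert z (B ∩ ⋂₀ 𝓧)) := by
    rw [hRind.insert_indep_iff_of_notMem (fun h => hzB h.1)]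
    exact ⟨hzE, hzR⟩
  have hRD : B ∩ ⋂₀ 𝓧 ⊆ F ∩ B := fun x hx => ⟨hx.2 F hF, hx.1⟩
  obtain ⟨W, hW, hzRW⟩ := hzRind.subset_isBasis_of_subset (insert_subset_insert hRD)
    (insert_subset hzE (inter_subset_left.trans hFE))
  have hWsub : W ⊆ F := hW.subset.trans (insert_subset hzF inter_subset_left)
  have hWF : M.IsBasis W F := hW.indep.isBasis_of_subset_of_subset_closure hWsub
    (hDF.subset_closure.trans
      ((M.closure_subset_closure (subset_insert _ _)).trans_eq hW.closure_eq_closure.symm))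
  have hzW : z ∈ W := hzRW (mem_insert _ _)
  obtain ⟨q, hqD, hqW⟩ : ∃ q ∈ F ∩ B, q ∉ W := by
    by_contra h
    push_neg at h
    have hWeq : W = insert z (F ∩ B) :=
      subset_antisymm hW.subset (insert_subset hzW h)
    have hind : M.Indep (insert z (F ∩ B)) := hWeq ▸ hW.indep
    rw [(hDF.indep).insert_indep_iff_of_notMem (fun hzD => hzB hzD.2)] at hind
    exact hind.2 (hDF.subset_closure hzF)
  have hDb : (M ↾ F).IsBase (F ∩ B) := (isBase_restrict_iff hFE).mpr hDF
  have hWb : (M ↾ F).IsBase W := (isBase_restrict_iff hFE).mpr hWF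
  obtain ⟨w, hw, hwB⟩ := hDb.exchange hWb ⟨hqD, hqW⟩
  have hwz : w = z := by
    rcases hW.subset hw.1 with h | h
    · exact h
    · exact absurd h hw.2
  subst hwz
  have hq_cl : q ∈ M.closure (insert w ((F ∩ B) \ {q})) := by
    have hb : M.IsBasis (insert w ((F ∩ B) \ {q})) F := (isBase_restrict_iff hFE).mp hwB
    exact hb.subset_closure hqD.1
  have hqint : q ∉ ⋂₀ 𝓧 := fun h => hqW (hzRW (mem_insert_of_mem _ ⟨hqD.2, h⟩))
  obtain ⟨G, hG, hqG⟩ : ∃ G ∈ 𝓧, q ∉ G := by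
    by_contra h
    push_neg at h
    exact hqint fun G hG => h G hG
  have hzBq : w ∈ M.closure (B \ {q}) := by
    refine M.closure_subset_closure (fun x hx => ?_) ((hbas G hG).subset_closure (hz G hG))
    exact ⟨hx.2, fun hxq => hqG (by rw [← show x = q from hxq]; exact hx.1)⟩
  have hqfin : q ∈ M.closure (B \ {q}) := by
    have h2 : M.closure (insert w ((F ∩ B) \ {q})) ⊆ M.closure (insert w (B \ {q})) :=
      M.closure_subset_closure (insert_subset_insert (diff_subset_diff_left inter_subset_right))
    have h3 : M.closure (insert w (B \ {q})) = M.closure (B \ {q}) :=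
      closure_insert_eq_of_mem_closure hzBq
    exact h3 ▸ h2 hq_cl
  exact hB.notMem_closure_diff_of_mem hqD.2 hqfin

private lemma up_mem (h𝓕 : M.IsModularCut 𝓕) (hF : F ∈ 𝓕) (hFX : F ⊆ M.closure X) :
    M.closure X ∈ 𝓕 :=
  h𝓕.2.1 F _ hF (flat_closure' M X) hFX

/-- The two-extension lemma : if the closures of two independent one-element extensions of `I`
in 'different directions' both lie in `𝓕`, then so does the closure of `I`. -/
private lemma pair_lemma (h𝓕 : M.IsModularCut 𝓕) {x y : α}
    (hxI : M.Indep (insert x I)) (hx : x ∉ M.closure I)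
    (hyE : y ∈ M.E) (hy : y ∉ M.closure (insert x I))
    (hFx : M.closure (insert x I) ∈ 𝓕) (hFy : M.closure (insert y I) ∈ 𝓕) :
    M.closure I ∈ 𝓕 := by
  have hIind : M.Indep I := hxI.subset (subset_insert _ _)
  have hIE : I ⊆ M.E := hIind.subset_ground
  have hyxI : y ∉ insert x I := fun h => hy (M.subset_closure _ hxI.subset_ground h)
  have hB : M.Indep (insert y (insert x I)) := by
    rw [hxI.insert_indep_iff_of_notMem hyxI]
    exact ⟨hyE, hy⟩
  have hyI : y ∉ I := fun h => hyxI (mem_insert_of_mem _ h)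
  have hyIind : M.Indep (insert y I) := hB.subset (insert_subset_insert (subset_insert _ _))
  have hxyI : x ∉ insert y I := by
    rintro (rfl | h)
    · exact hyxI (mem_insert _ _)
    · exact hx (M.subset_closure I hIE h)
  have hxFy : x ∉ M.closure (insert y I) := by
    intro h
    have hsub : insert y I ⊆ insert y (insert x I) \ {x} := by
      intro u hu
      refine ⟨(insert_subset_insert (subset_insert _ _)) hu, fun huq => hxyI ?_⟩
      rw [← show u = x from huq]; exact hu
    exact hB.notMem_closure_diff_of_mem (mem_insert_of_mem _ (mem_insert _ _))
      (M.closure_subset_closure hsub h)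
  have hBFx : M.closure (insert x I) ∩ insert y (insert x I) = insert x I := by
    apply subset_antisymm
    · rintro u ⟨huF, (rfl | hu)⟩
      · exact absurd huF hy
      · exact hu
    · exact subset_inter (M.subset_closure _ hxI.subset_ground) (subset_insert _ _)
  have hBFy : M.closure (insert y I) ∩ insert y (insert x I) = insert y I := by
    apply subset_antisymm
    · rintro u ⟨huF, (rfl | (rfl | hu))⟩
      · exact mem_insert _ _
      · exact absurd huF hxFy
      · exact mem_insert_of_mem _ hu
    · refine subset_inter (M.subset_closure _ hyIind.subset_ground) ?_
      exact insert_subset_insert (subset_insert _ _)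
  have hmp : M.IsModularPair (M.closure (insert x I)) (M.closure (insert y I)) := by
    refine ⟨insert y (insert x I), hB, ?_⟩
    rintro Z (rfl | rfl)
    · rw [hBFx]; exact hxI.isBasis_closure
    · rw [hBFy]; exact hyIind.isBasis_closure
  have hint := h𝓕.2.2.1 _ _ hFx hFy hmp
  have heq : M.closure (insert x I) ∩ M.closure (insert y I) = M.closure I := by
    apply subset_antisymm
    · have hcr := sInter_subset_closure_inter hB
        (𝓧 := {M.closure (insert x I), M.closure (insert y I)}) ⟨_, mem_insert _ _⟩ ?_
      · have hs : ⋂₀ {M.closure (insert x I), M.closure (insert y I)} =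
            M.closure (insert x I) ∩ M.closure (insert y I) := sInter_pair _ _
        rw [hs] at hcr
        refine hcr.trans ?_
        apply M.closure_subset_closure
        rintro u ⟨(rfl | (rfl | hu)), hu2⟩
        · exact absurd hu2.1 hy
        · exact absurd hu2.2 hxFy
        · exact hu
      · rintro Z (rfl | rfl)
        · rw [hBFx]; exact hxI.isBasis_closure
        · rw [hBFy]; exact hyIind.isBasis_closure
    · exact subset_inter (M.closure_subset_closure (subset_insert _ _))
        (M.closure_subset_closure (subset_insert _ _))
  rwa [heq] at hint

/-- Independence in the one-element extension. -/
private def ExtIndep (M : Matroid α) (𝓕 : Set (Set α)) (e : α) (I : Set α) : Prop :=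
  M.Indep (I \ {e}) ∧ (e ∈ I → M.closure (I \ {e}) ∉ 𝓕)

private lemma extIndep_subset (h𝓕 : M.IsModularCut 𝓕) {J : Set α}
    (hJ : ExtIndep M 𝓕 e J) (hIJ : I ⊆ J) : ExtIndep M 𝓕 e I := by
  refine ⟨hJ.1.subset (diff_subset_diff_left hIJ), fun heI hmem => ?_⟩
  exact hJ.2 (hIJ heI)
    (up_mem h𝓕 hmem (M.closure_subset_closure (diff_subset_diff_left hIJ)))

private lemma extIndep_ground (hI : ExtIndep M 𝓕 e I) : I ⊆ insert e M.E := by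
  intro x hx
  rcases eq_or_ne x e with rfl | hne
  · exact mem_insert _ _
  · exact mem_insert_of_mem _ (hI.1.subset_ground ⟨hx, hne⟩)

private lemma indep_inter_closure_diff (hJ : M.Indep X) (S : Set α) :
    X ∩ M.closure (X \ S) = X \ S := by
  apply subset_antisymm
  · rintro x ⟨hxX, hxcl⟩
    refine ⟨hxX, fun hxS => hJ.notMem_closure_diff_of_mem hxX ?_⟩
    exact M.closure_subset_closure (diff_subset_diff_right (singleton_subset_iff.mpr hxS)) hxcl
  · exact subset_inter diff_subset (M.subset_closure _ (diff_subset.trans hJ.subset_ground))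

private lemma extIndep_maximal (h𝓕 : M.IsModularCut 𝓕) (he : e ∉ M.E) :
    ∀ X, X ⊆ insert e M.E → ExistsMaximalSubsetProperty (ExtIndep M 𝓕 e) X := by
  intro X hX I hI hIX
  have hX₀E : X \ {e} ⊆ M.E := fun x hx => ((hX hx.1).resolve_left hx.2)
  obtain ⟨J, hJ, hIJ⟩ := hI.1.subset_isBasis_of_subset (diff_subset_diff_left hIX) hX₀E
  have hJX₀ : J ⊆ X \ {e} := hJ.subset
  have hJE : J ⊆ M.E := hJX₀.trans hX₀E
  have heJ : e ∉ J := fun h => he (hJE h)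
  have hJX : J ⊆ X := hJX₀.trans diff_subset
  have hJi : M.Indep J := hJ.indep
  have hJd : J \ {e} = J := diff_singleton_eq_self heJ
  have hIsub : I ⊆ insert e J := by
    intro x hx
    rcases eq_or_ne x e with rfl | hne
    · exact mem_insert _ _
    · exact mem_insert_of_mem _ (hIJ ⟨hx, hne⟩)
  by_cases heX : e ∈ X
  · by_cases hclJ : M.closure J ∈ 𝓕
    · by_cases heI : e ∈ I
      · -- hard case
        have hclI₀ : M.closure (I \ {e}) ∉ 𝓕 := hI.2 heI
        have hI₀J : I \ {e} ⊆ J := hIJ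
        obtain ⟨x, hxJ, hxI₀, hclJx⟩ :
            ∃ x ∈ J, x ∉ I \ {e} ∧ M.closure (J \ {x}) ∉ 𝓕 := by
          by_contra hcon
          push_neg at hcon
          set 𝒮 : Set (Set α) := {S | S ⊆ J \ (I \ {e}) ∧ M.closure (J \ S) ∈ 𝓕} with h𝒮
          have hbound : ∀ c ⊆ 𝒮, IsChain (· ⊆ ·) c → c.Nonempty →
              ∃ ub ∈ 𝒮, ∀ s ∈ c, s ⊆ ub := by
            intro c hc𝒮 hchain hcne
            refine ⟨⋃₀ c, ⟨?_, ?_⟩, fun s hs => subset_sUnion_of_mem hs⟩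
            · exact sUnion_subset (fun s hs => (hc𝒮 hs).1)
            set 𝓒 : Set (Set α) := (fun S => M.closure (J \ S)) '' c with h𝓒
            have hbas𝓒 : ∀ F ∈ 𝓒, M.IsBasis (F ∩ J) F := by
              rintro F ⟨S, hS, rfl⟩
              rw [inter_comm, indep_inter_closure_diff hJi]
              exact (hJi.subset diff_subset).isBasis_closure
            have hΦ := sInter_subset_closure_inter hJi (hcne.image _) hbas𝓒
            have hJΦ : J ∩ ⋂₀ 𝓒 = J \ ⋃₀ c := by
              apply subset_antisymm
              · rintro x ⟨hxJ, hxint⟩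
                refine ⟨hxJ, fun hxU => ?_⟩
                obtain ⟨S, hS, hxS⟩ := mem_sUnion.mp hxU
                have hxcl : x ∈ M.closure (J \ S) :=
                  mem_sInter.mp hxint _ ⟨S, hS, rfl⟩
                have hmem : x ∈ J \ S := by
                  rw [← indep_inter_closure_diff hJi S]; exact ⟨hxJ, hxcl⟩
                exact hmem.2 hxS
              · rintro x ⟨hxJ, hxU⟩
                refine ⟨hxJ, mem_sInter.mpr ?_⟩
                rintro F ⟨S, hS, rfl⟩
                exact M.subset_closure _ (diff_subset.trans hJE)
                  ⟨hxJ, fun hxS => hxU (mem_sUnion.mpr ⟨S, hS, hxS⟩)⟩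
            have hΦeq : ⋂₀ 𝓒 = M.closure (J \ ⋃₀ c) := by
              apply subset_antisymm
              · exact hΦ.trans (by rw [hJΦ])
              · apply subset_sInter
                rintro F ⟨S, hS, rfl⟩
                exact M.closure_subset_closure
                  (diff_subset_diff_right (subset_sUnion_of_mem hS))
            have hΦ𝓕 : ⋂₀ 𝓒 ∈ 𝓕 := by
              by_cases hfin : 𝓒.Finite
              · obtain ⟨F₀, hF₀, hmin⟩ :=
                  hfin.exists_minimal (hcne.image _)
                have hch : IsChain (· ⊆ ·) 𝓒 := by
                  rintro F₁ ⟨S₁, hS₁, rfl⟩ F₂ ⟨S₂, hS₂, rfl⟩ hne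
                  rcases hchain.total hS₁ hS₂ with h | h
                  · exact Or.inr (M.closure_subset_closure (diff_subset_diff_right h))
                  · exact Or.inl (M.closure_subset_closure (diff_subset_diff_right h))
                have hleast : ∀ F ∈ 𝓒, F₀ ⊆ F := by
                  intro F hF
                  rcases eq_or_ne F₀ F with rfl | hne
                  · exact Subset.rfl
                  rcases hch hF₀ hF hne with h | h
                  · exact h
                  · exact hmin hF h
                have : ⋂₀ 𝓒 = F₀ := subset_antisymm (sInter_subset_of_mem hF₀)
                    (subset_sInter hleast)
                rw [this]
                obtain ⟨S₀, hS₀, rfl⟩ := hF₀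
                exact (hc𝒮 hS₀).2
              · have hch : IsChain (· ⊆ ·) 𝓒 := by
                  rintro F₁ ⟨S₁, hS₁, rfl⟩ F₂ ⟨S₂, hS₂, rfl⟩ hne
                  rcases hchain.total hS₁ hS₂ with h | h
                  · exact Or.inr (M.closure_subset_closure (diff_subset_diff_right h))
                  · exact Or.inl (M.closure_subset_closure (diff_subset_diff_right h))
                refine h𝓕.2.2.2 𝓒 ?_ hfin hch ⟨J, hJi, hbas𝓒⟩
                rintro F ⟨S, hS, rfl⟩
                exact (hc𝒮 hS).2
            rw [hΦeq] at hΦ𝓕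
            exact hΦ𝓕
          obtain ⟨S, hS0, hSmax⟩ := zorn_subset_nonempty 𝒮 hbound ∅
            ⟨empty_subset _, by rw [diff_empty]; exact hclJ⟩
          have hSJI : S ⊆ J \ (I \ {e}) := hSmax.1.1
          have hSne : S ≠ J \ (I \ {e}) := by
            intro hEq
            apply hclI₀
            have : J \ S = I \ {e} := by rw [hEq, diff_diff_cancel_left hI₀J]
            rw [← this]
            exact hSmax.1.2
          obtain ⟨x, hxJI, hxS⟩ : ∃ x ∈ J \ (I \ {e}), x ∉ S := by
            by_contra h
            push_neg at h
            exact hSne (subset_antisymm hSJI h)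
          have hx𝓕 : M.closure (J \ {x}) ∈ 𝓕 := hcon x hxJI.1 hxJI.2
          have hmp : M.IsModularPair (M.closure (J \ S)) (M.closure (J \ {x})) := by
            refine ⟨J, hJi, ?_⟩
            rintro Z (rfl | rfl)
            · rw [inter_comm, indep_inter_closure_diff hJi]
              exact (hJi.subset diff_subset).isBasis_closure
            · rw [inter_comm, indep_inter_closure_diff hJi]
              exact (hJi.subset diff_subset).isBasis_closure
          have hint := h𝓕.2.2.1 _ _ hSmax.1.2 hx𝓕 hmp
          have heqint : M.closure (J \ S) ∩ M.closure (J \ {x}) =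
              M.closure (J \ insert x S) := by
            apply subset_antisymm
            · have hcr := sInter_subset_closure_inter hJi
                (𝓧 := {M.closure (J \ S), M.closure (J \ {x})}) ⟨_, mem_insert _ _⟩ ?_
              · rw [sInter_pair] at hcr
                refine hcr.trans ?_
                have : J ∩ (M.closure (J \ S) ∩ M.closure (J \ {x})) = J \ insert x S := by
                  rw [show J ∩ (M.closure (J \ S) ∩ M.closure (J \ {x})) =
                      (J ∩ M.closure (J \ S)) ∩ (J ∩ M.closure (J \ {x})) by
                    ext u; simp only [mem_inter_iff]; tauto,
                    indep_inter_closure_diff hJi, indep_inter_closure_diff hJi,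
                    diff_inter_diff, union_singleton]
                rw [this]
              · rintro Z (rfl | rfl)
                · rw [inter_comm, indep_inter_closure_diff hJi]
                  exact (hJi.subset diff_subset).isBasis_closure
                · rw [inter_comm, indep_inter_closure_diff hJi]
                  exact (hJi.subset diff_subset).isBasis_closure
            · exact subset_inter
                (M.closure_subset_closure (diff_subset_diff_right (subset_insert _ _)))
                (M.closure_subset_closure (diff_subset_diff_right
                  (singleton_subset_iff.mpr (mem_insert _ _))))
          have hxS𝒮 : insert x S ∈ 𝒮 := ⟨insert_subset hxJI hSJI, by rw [← heqint]; exact hint⟩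
          exact hxS (hSmax.2 hxS𝒮 (subset_insert _ _) (mem_insert _ _))
        -- use insert e (J \ {x})
        refine ⟨insert e (J \ {x}), ?_, ⟨⟨?_, ?_⟩, ?_⟩⟩
        · intro u hu
          rcases eq_or_ne u e with rfl | hne
          · exact mem_insert _ _
          · refine mem_insert_of_mem _ ⟨hIJ ⟨hu, hne⟩, fun hux => hxI₀ ?_⟩
            rw [← show u = x from hux]; exact ⟨hu, hne⟩
        · constructor
          · rw [insert_diff_of_mem _ (mem_singleton e), diff_singleton_eq_self
              (fun h => heJ (diff_subset h))]
            exact hJi.subset diff_subset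
          · intro _
            rw [insert_diff_of_mem _ (mem_singleton e), diff_singleton_eq_self
              (fun h => heJ (diff_subset h))]
            exact hclJx
        · exact insert_subset heX (diff_subset.trans hJX)
        · rintro K ⟨hKext, hKX⟩ hJ₀K
          have heK : e ∈ K := hJ₀K (mem_insert _ _)
          have hJ₀K₀ : J \ {x} ⊆ K \ {e} := by
            intro u hu
            exact ⟨hJ₀K (mem_insert_of_mem _ hu), fun hue => heJ (by
              rw [show u = e from hue] at hu; exact absurd hu.1 (fun h => heJ h))⟩
          have hK₀X₀ : K \ {e} ⊆ X \ {e} := diff_subset_diff_left hKX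
          have hK₀cl : M.closure (K \ {e}) ∉ 𝓕 := hKext.2 heK
          have hK₀ : K \ {e} = J \ {x} := by
            by_contra hne
            obtain ⟨y, hyK₀, hyJ₀⟩ : ∃ y ∈ K \ {e}, y ∉ J \ {x} := by
              by_contra h
              push_neg at h
              exact hne (subset_antisymm h hJ₀K₀)
            rcases eq_or_ne y x with rfl | hyx
            · have hJK₀ : J ⊆ K \ {e} := by
                intro u hu
                rcases eq_or_ne u y with rfl | hne'
                · exact hyK₀
                · exact hJ₀K₀ ⟨hu, hne'⟩
              have hJeq := hJ.eq_of_subset_indep hKext.1 hJK₀ hK₀X₀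
              rw [← hJeq] at hK₀cl
              exact hK₀cl hclJ
            · have hyJ : y ∉ J := fun h => hyJ₀ ⟨h, hyx⟩
              have hyX₀ : y ∈ X \ {e} := hK₀X₀ hyK₀
              have hycl : y ∈ M.closure J := hJ.subset_closure hyX₀
              have hJ₀ind : M.Indep (J \ {x}) := hJi.subset diff_subset
              have hJ₀y_ind : M.Indep (insert y (J \ {x})) :=
                hKext.1.subset (insert_subset hyK₀ hJ₀K₀)
              have hyclJ₀ : y ∉ M.closure (J \ {x}) := by
                have := (hJ₀ind.insert_indep_iff_of_notMem hyJ₀).mp hJ₀y_ind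
                exact this.2
              have hins : insert x (J \ {x}) = J := by
                rw [insert_diff_singleton, insert_eq_self.mpr hxJ]
              have hxcl : x ∈ M.closure (insert y (J \ {x})) := by
                apply mem_closure_insert hyclJ₀
                rw [hins]
                exact hycl
              have hJsub : M.closure J ⊆ M.closure (insert y (J \ {x})) := by
                apply closure_subset_closure_of_subset_closure
                intro u hu
                rcases eq_or_ne u x with rfl | hne'
                · exact hxcl
                · exact M.subset_closure _ hJ₀y_ind.subset_ground
                    (mem_insert_of_mem _ ⟨hu, hne'⟩)
              have h1 : M.closure (insert y (J \ {x})) ∈ 𝓕 := up_mem h𝓕 hclJ hJsub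
              have h2 : M.closure (K \ {e}) ∈ 𝓕 := up_mem h𝓕 h1
                (M.closure_subset_closure (insert_subset hyK₀ hJ₀K₀))
              exact hK₀cl h2
          intro u hu
          rcases eq_or_ne u e with rfl | hne
          · exact mem_insert _ _
          · exact mem_insert_of_mem _ (hK₀ ▸ (⟨hu, hne⟩ : u ∈ K \ {e}))
      · -- e ∈ X, cl J ∈ 𝓕, e ∉ I : use J
        have hIJ' : I ⊆ J := by
          rw [← diff_singleton_eq_self heI]; exact hIJ
        refine ⟨J, hIJ', ⟨⟨⟨by rw [hJd]; exact hJi, fun h => absurd h heJ⟩, hJX⟩, ?_⟩⟩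
        rintro K ⟨hKext, hKX⟩ hJK
        have hJK₀ : J ⊆ K \ {e} := fun u hu => ⟨hJK hu, fun hue => heJ (by
          rwa [show u = e from hue] at hu)⟩
        have hKeq : K \ {e} = J :=
          (hJ.eq_of_subset_indep hKext.1 hJK₀ (diff_subset_diff_left hKX)).symm
        have heK : e ∉ K := by
          intro heK
          have := hKext.2 heK
          rw [hKeq] at this
          exact this hclJ
        intro u hu
        have : u ∈ K \ {e} := ⟨hu, fun hue => heK (by rwa [show u = e from hue] at hu)⟩
        exact hKeq ▸ this
    · -- e ∈ X, cl J ∉ 𝓕 : use insert e J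
      refine ⟨insert e J, hIsub, ⟨⟨?_, insert_subset heX hJX⟩, ?_⟩⟩
      · constructor
        · rw [insert_diff_of_mem _ (mem_singleton e), hJd]
          exact hJi
        · intro _
          rw [insert_diff_of_mem _ (mem_singleton e), hJd]
          exact hclJ
      · rintro K ⟨hKext, hKX⟩ hJK
        have hJK₀ : J ⊆ K \ {e} := fun u hu =>
          ⟨hJK (mem_insert_of_mem _ hu), fun hue => heJ (by rwa [show u = e from hue] at hu)⟩
        have hKeq : K \ {e} = J :=
          (hJ.eq_of_subset_indep hKext.1 hJK₀ (diff_subset_diff_left hKX)).symm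
        intro u hu
        rcases eq_or_ne u e with rfl | hne
        · exact mem_insert _ _
        · exact mem_insert_of_mem _ (hKeq ▸ (⟨hu, hne⟩ : u ∈ K \ {e}))
  · -- e ∉ X
    have heI : e ∉ I := fun h => heX (hIX h)
    have hIJ' : I ⊆ J := by rw [← diff_singleton_eq_self heI]; exact hIJ
    refine ⟨J, hIJ', ⟨⟨⟨by rw [hJd]; exact hJi, fun h => absurd h heJ⟩, hJX⟩, ?_⟩⟩
    rintro K ⟨hKext, hKX⟩ hJK
    have heK : e ∉ K := fun h => heX (hKX h)
    have hKind : M.Indep K := by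
      rw [← diff_singleton_eq_self heK]; exact hKext.1
    have hKeq := hJ.eq_of_subset_indep hKind hJK
      (fun x hx => ⟨hKX hx, fun hxe => heK (by rwa [show x = e from hxe] at hx)⟩)
    exact hKeq ▸ Subset.rfl

end ExtensionAux

section ExtensionAux2

variable {M : Matroid α} {𝓕 : Set (Set α)} {e : α} {I B : Set α}

private lemma extIndep_aug (h𝓕 : M.IsModularCut 𝓕) (he : e ∉ M.E)
    (hI : ExtIndep M 𝓕 e I) (hInmax : ¬ Maximal (ExtIndep M 𝓕 e) I)
    (hBmax : Maximal (ExtIndep M 𝓕 e) B) :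
    ∃ x ∈ B \ I, ExtIndep M 𝓕 e (insert x I) := by
  have hB₀ : M.Indep (B \ {e}) := hBmax.1.1
  -- B cannot be extended by any element outside its closure
  have hBnotext : ∀ w ∈ M.E, w ∉ M.closure (B \ {e}) →
      ¬ ExtIndep M 𝓕 e (insert w B) ∧ w ∉ B := by
    intro w hwE hwcl
    have hwB : w ∉ B := fun h =>
      hwcl (M.subset_closure _ hB₀.subset_ground ⟨h, fun hh => he (by
        rwa [show w = e from hh] at hwE)⟩)
    exact ⟨fun hext => hwB (hBmax.2 hext (subset_insert w B) (mem_insert w B)), hwB⟩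
  have hwB𝓕 : e ∈ B → ∀ w ∈ M.E, w ∉ M.closure (B \ {e}) →
      M.closure (insert w (B \ {e})) ∈ 𝓕 := by
    intro heB w hwE hwcl
    obtain ⟨hnotext, hwB⟩ := hBnotext w hwE hwcl
    by_contra hcl
    apply hnotext
    have hwe : w ≠ e := fun h => he (h ▸ hwE)
    have hdiff : insert w B \ {e} = insert w (B \ {e}) :=
      (insert_diff_singleton_comm hwe B).symm
    constructor
    · rw [hdiff, hB₀.insert_indep_iff_of_notMem (fun h => hwB h.1)]
      exact ⟨hwE, hwcl⟩
    · intro _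
      rw [hdiff]
      exact hcl
  by_cases heB : e ∈ B
  · by_cases heI : e ∈ I
    · -- e ∈ I, e ∈ B
      have hI₀ : M.Indep (I \ {e}) := hI.1
      have hclI₀ : M.closure (I \ {e}) ∉ 𝓕 := hI.2 heI
      -- get a genuine extension direction z of I
      obtain ⟨K, hK, hIK, hKI⟩ : ∃ K, ExtIndep M 𝓕 e K ∧ I ⊆ K ∧ ¬ K ⊆ I := by
        by_contra h
        push_neg at h
        exact hInmax ⟨hI, fun K hK hIK => h K hK hIK⟩
      obtain ⟨z, hzK, hzI⟩ := not_subset.mp hKI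
      have hzext : ExtIndep M 𝓕 e (insert z I) :=
        extIndep_subset h𝓕 hK (insert_subset hzK hIK)
      have hze : z ≠ e := fun h => hzI (h ▸ heI)
      have hzdiff : insert z I \ {e} = insert z (I \ {e}) :=
        (insert_diff_singleton_comm hze I).symm
      have hzind : M.Indep (insert z (I \ {e})) := by rw [← hzdiff]; exact hzext.1
      have hz𝓕 : M.closure (insert z (I \ {e})) ∉ 𝓕 := by
        rw [← hzdiff]; exact hzext.2 (mem_insert_of_mem _ heI)
      have hzI₀ : z ∉ I \ {e} := fun h => hzI h.1
      have hzE : z ∈ M.E := hzind.subset_ground (mem_insert _ _)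
      have hzcl : z ∉ M.closure (I \ {e}) :=
        ((hI₀.insert_indep_iff_of_notMem hzI₀).mp hzind).2
      by_contra hcon
      push_neg at hcon
      have hcon' : ∀ x ∈ B \ {e}, x ∉ I \ {e} → M.Indep (insert x (I \ {e})) →
          M.closure (insert x (I \ {e})) ∈ 𝓕 := by
        intro x hxB₀ hxI₀ hxind
        have hxe : x ≠ e := hxB₀.2
        have hxI : x ∉ I := fun h => hxI₀ ⟨h, hxe⟩
        have := hcon x ⟨hxB₀.1, hxI⟩
        rw [ExtIndep, not_and] at this
        have h2 := this (by rwa [(insert_diff_singleton_comm hxe I).symm])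
        push_neg at h2
        rw [(insert_diff_singleton_comm hxe I).symm] at h2
        exact h2.2
      by_cases hBI : B \ {e} ⊆ M.closure (I \ {e})
      · -- subcase (ii)
        have hzB : z ∉ B := fun h => hzcl (hBI ⟨h, hze⟩)
        have hzclB : z ∉ M.closure (B \ {e}) := fun h =>
          hzcl (closure_subset_closure_of_subset_closure hBI h)
        have h𝓕z := hwB𝓕 heB z hzE hzclB
        apply hz𝓕
        refine up_mem h𝓕 h𝓕z ?_
        have : insert z (B \ {e}) ⊆ M.closure (insert z (I \ {e})) := by
          intro u hu
          rcases hu with rfl | hu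
          · exact M.subset_closure _ hzind.subset_ground (mem_insert _ _)
          · exact M.closure_subset_closure (subset_insert _ _) (hBI hu)
        exact closure_subset_closure_of_subset_closure this
      · obtain ⟨x₁, hx₁B, hx₁cl⟩ := not_subset.mp hBI
        have hx₁E : x₁ ∈ M.E := hB₀.subset_ground hx₁B
        have hx₁I₀ : x₁ ∉ I \ {e} := fun h =>
          hx₁cl (M.subset_closure _ hI₀.subset_ground h)
        have hx₁ind : M.Indep (insert x₁ (I \ {e})) := by
          rw [hI₀.insert_indep_iff_of_notMem hx₁I₀]
          exact ⟨hx₁E, hx₁cl⟩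
        have hF₁ : M.closure (insert x₁ (I \ {e})) ∈ 𝓕 := hcon' x₁ hx₁B hx₁I₀ hx₁ind
        have hzF₁ : z ∉ M.closure (insert x₁ (I \ {e})) := by
          intro h
          have hx₁z : x₁ ∈ M.closure (insert z (I \ {e})) := mem_closure_insert hzcl h
          apply hz𝓕
          refine up_mem h𝓕 hF₁ (closure_subset_closure_of_subset_closure ?_)
          intro u hu
          rcases hu with rfl | hu
          · exact hx₁z
          · exact M.subset_closure _ hzind.subset_ground (mem_insert_of_mem _ hu)
        have hBF₁ : B \ {e} ⊆ M.closure (insert x₁ (I \ {e})) := by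
          intro x₂ hx₂B
          by_contra hx₂F₁
          have hx₂cl : x₂ ∉ M.closure (I \ {e}) := fun h =>
            hx₂F₁ (M.closure_subset_closure (subset_insert _ _) h)
          have hx₂E : x₂ ∈ M.E := hB₀.subset_ground hx₂B
          have hx₂I₀ : x₂ ∉ I \ {e} := fun h =>
            hx₂cl (M.subset_closure _ hI₀.subset_ground h)
          have hx₂ind : M.Indep (insert x₂ (I \ {e})) := by
            rw [hI₀.insert_indep_iff_of_notMem hx₂I₀]
            exact ⟨hx₂E, hx₂cl⟩
          exact hclI₀ (pair_lemma h𝓕 hx₁ind hx₁cl hx₂E hx₂F₁ hF₁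
            (hcon' x₂ hx₂B hx₂I₀ hx₂ind))
        have hclB₀F₁ : M.closure (B \ {e}) ⊆ M.closure (insert x₁ (I \ {e})) :=
          closure_subset_closure_of_subset_closure hBF₁
        by_cases hF₁B : M.closure (insert x₁ (I \ {e})) ⊆ M.closure (B \ {e})
        · exact hBmax.1.2 heB (by
            rw [subset_antisymm hclB₀F₁ hF₁B]; exact hF₁)
        · obtain ⟨v, hvF₁, hvB₀⟩ := not_subset.mp hF₁B
          have hvE : v ∈ M.E := closure_subset_ground M _ hvF₁
          have hvnclB : v ∉ M.closure (B \ {e}) := hvB₀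
          have hG := hwB𝓕 heB v hvE hvnclB
          have hzG : z ∉ M.closure (insert v (B \ {e})) := by
            intro h
            apply hzF₁
            refine closure_subset_closure_of_subset_closure ?_ h
            exact insert_subset hvF₁ hBF₁
          have hvind : M.Indep (insert v (B \ {e})) := by
            rw [hB₀.insert_indep_iff_of_notMem (fun h => hvnclB
              (M.subset_closure _ hB₀.subset_ground h))]
            exact ⟨hvE, hvnclB⟩
          have hzclB : z ∉ M.closure (B \ {e}) := fun h => hzF₁ (hclB₀F₁ h)
          exact hBmax.1.2 heB (pair_lemma h𝓕 hvind hvnclB hzE hzG hG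
            (hwB𝓕 heB z hzE hzclB))
    · -- e ∉ I, e ∈ B
      have hIi : M.Indep I := by rw [← diff_singleton_eq_self heI]; exact hI.1
      by_cases hclI : M.closure I ∈ 𝓕
      · -- find x ∈ B \ {e} outside closure of I
        have hBI : ¬ (B \ {e} ⊆ M.closure I) := by
          intro hBI
          have hclB₀I : M.closure (B \ {e}) ⊆ M.closure I :=
            closure_subset_closure_of_subset_closure hBI
          have hImaximal : Maximal (ExtIndep M 𝓕 e) I := by
            have hIbase : M.IsBase I := by
              by_cases hIclB : M.closure I ⊆ M.closure (B \ {e})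
              · exact absurd (by rw [subset_antisymm hclB₀I hIclB]; exact hclI)
                  (hBmax.1.2 heB)
              · obtain ⟨v, hvI, hvB⟩ := not_subset.mp hIclB
                have hvE : v ∈ M.E := closure_subset_ground M _ hvI
                have hvq := hwB𝓕 heB v hvE hvB
                have hEsub : M.E ⊆ M.closure (insert v (B \ {e})) := by
                  intro w hwE
                  by_cases hwcl : w ∈ M.closure (B \ {e})
                  · exact M.closure_subset_closure (subset_insert _ _) hwcl
                  by_contra hwv
                  have hvind : M.Indep (insert v (B \ {e})) := by
                    rw [hB₀.insert_indep_iff_of_notMem (fun h => hvB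
                      (M.subset_closure _ hB₀.subset_ground h))]
                    exact ⟨hvE, hvB⟩
                  exact hBmax.1.2 heB (pair_lemma h𝓕 hvind hvB hwE hwv hvq
                    (hwB𝓕 heB w hwE hwcl))
                have hEI : M.E ⊆ M.closure I := by
                  refine hEsub.trans (closure_subset_closure_of_subset_closure ?_)
                  exact insert_subset hvI hBI
                exact hIi.isBase_of_ground_subset_closure hEI
            refine ⟨hI, fun K hK hIK => ?_⟩
            have hIK₀ : I ⊆ K \ {e} := fun x hx =>
              ⟨hIK hx, fun hxe => he (mem_singleton_iff.mp hxe ▸ hIi.subset_ground hx)⟩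
            have hKeq : K \ {e} = I := (hIbase.eq_of_subset_indep hK.1 hIK₀).symm
            intro x hxK
            rcases eq_or_ne x e with rfl | hxe
            · exfalso
              have := hK.2 hxK
              rw [hKeq] at this
              exact this hclI
            · exact hKeq ▸ (⟨hxK, hxe⟩ : x ∈ K \ {e})
          exact hInmax hImaximal
        obtain ⟨x, hxB₀, hxcl⟩ := not_subset.mp hBI
        have hxE : x ∈ M.E := hB₀.subset_ground hxB₀
        have hxI : x ∉ I := fun h => hxcl (M.subset_closure _ hIi.subset_ground h)
        refine ⟨x, ⟨hxB₀.1, hxI⟩, ?_, ?_⟩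
        · have hxe : x ≠ e := hxB₀.2
          rw [(insert_diff_singleton_comm hxe I).symm, diff_singleton_eq_self heI]
          rw [hIi.insert_indep_iff_of_notMem hxI]
          exact ⟨hxE, hxcl⟩
        · intro hein
          exfalso
          rcases hein with h | h
          · exact hxB₀.2 h.symm
          · exact heI h
      · -- cl I ∉ 𝓕 : extend by e itself
        refine ⟨e, ⟨heB, heI⟩, ?_, fun _ => ?_⟩
        · rw [insert_diff_of_mem _ (mem_singleton e), diff_singleton_eq_self heI]
          exact hIi
        · rw [insert_diff_of_mem _ (mem_singleton e), diff_singleton_eq_self heI]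
          exact hclI
  · -- e ∉ B : B is a base of M and M.E ∈ 𝓕
    have hBd : B \ {e} = B := diff_singleton_eq_self heB
    have hBi : M.Indep B := by rw [← hBd]; exact hB₀
    have hBbase : M.IsBase B := by
      refine hBi.isBase_of_ground_subset_closure (fun w hwE => ?_)
      by_contra hwcl
      rw [← hBd] at hwcl
      obtain ⟨hnotext, hwB⟩ := hBnotext w hwE hwcl
      apply hnotext
      have hwe : w ≠ e := fun h => he (h ▸ hwE)
      constructor
      · rw [(insert_diff_singleton_comm hwe B).symm, hBd,
          hBi.insert_indep_iff_of_notMem hwB]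
        rw [hBd] at hwcl
        exact ⟨hwE, hwcl⟩
      · rintro (h | h)
        · exact absurd h.symm hwe
        · exact absurd h heB
    have hE𝓕 : M.E ∈ 𝓕 := by
      have hnotext : ¬ ExtIndep M 𝓕 e (insert e B) := fun hext =>
        heB (hBmax.2 hext (subset_insert e B) (mem_insert e B))
      rw [ExtIndep, not_and] at hnotext
      have h1 : M.Indep (insert e B \ {e}) := by
        rw [insert_diff_of_mem _ (mem_singleton e), hBd]
        exact hBi
      have h2 := hnotext h1
      push_neg at h2
      have h3 := h2.2
      rw [insert_diff_of_mem _ (mem_singleton e), hBd, hBbase.closure_eq] at h3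
      exact h3
    by_cases heI : e ∈ I
    · -- e ∈ I, e ∉ B
      have hI₀ : M.Indep (I \ {e}) := hI.1
      have hclI₀ : M.closure (I \ {e}) ∉ 𝓕 := hI.2 heI
      obtain ⟨K, hK, hIK, hKI⟩ : ∃ K, ExtIndep M 𝓕 e K ∧ I ⊆ K ∧ ¬ K ⊆ I := by
        by_contra h
        push_neg at h
        exact hInmax ⟨hI, fun K hK hIK => h K hK hIK⟩
      obtain ⟨z, hzK, hzI⟩ := not_subset.mp hKI
      have hzext : ExtIndep M 𝓕 e (insert z I) :=
        extIndep_subset h𝓕 hK (insert_subset hzK hIK)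
      have hze : z ≠ e := fun h => hzI (h ▸ heI)
      have hzdiff : insert z I \ {e} = insert z (I \ {e}) :=
        (insert_diff_singleton_comm hze I).symm
      have hzind : M.Indep (insert z (I \ {e})) := by rw [← hzdiff]; exact hzext.1
      have hz𝓕 : M.closure (insert z (I \ {e})) ∉ 𝓕 := by
        rw [← hzdiff]; exact hzext.2 (mem_insert_of_mem _ heI)
      have hzI₀ : z ∉ I \ {e} := fun h => hzI h.1
      have hzE : z ∈ M.E := hzind.subset_ground (mem_insert _ _)
      have hzcl : z ∉ M.closure (I \ {e}) :=
        ((hI₀.insert_indep_iff_of_notMem hzI₀).mp hzind).2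
      by_contra hcon
      push_neg at hcon
      have hcon' : ∀ x ∈ B, x ∉ I \ {e} → M.Indep (insert x (I \ {e})) →
          M.closure (insert x (I \ {e})) ∈ 𝓕 := by
        intro x hxB hxI₀ hxind
        have hxe : x ≠ e := fun h => heB (h ▸ hxB)
        have hxI : x ∉ I := fun h => hxI₀ ⟨h, hxe⟩
        have := hcon x ⟨hxB, hxI⟩
        rw [ExtIndep, not_and] at this
        have h2 := this (by rwa [(insert_diff_singleton_comm hxe I).symm])
        push_neg at h2
        rw [(insert_diff_singleton_comm hxe I).symm] at h2
        exact h2.2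
      by_cases hBI : B ⊆ M.closure (I \ {e})
      · have : M.E ⊆ M.closure (I \ {e}) := by
          rw [← hBbase.closure_eq]
          exact closure_subset_closure_of_subset_closure hBI
        exact hzcl (this hzE)
      · obtain ⟨x₁, hx₁B, hx₁cl⟩ := not_subset.mp hBI
        have hx₁E : x₁ ∈ M.E := hBi.subset_ground hx₁B
        have hx₁I₀ : x₁ ∉ I \ {e} := fun h =>
          hx₁cl (M.subset_closure _ hI₀.subset_ground h)
        have hx₁ind : M.Indep (insert x₁ (I \ {e})) := by
          rw [hI₀.insert_indep_iff_of_notMem hx₁I₀]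
          exact ⟨hx₁E, hx₁cl⟩
        have hF₁ : M.closure (insert x₁ (I \ {e})) ∈ 𝓕 := hcon' x₁ hx₁B hx₁I₀ hx₁ind
        have hzF₁ : z ∉ M.closure (insert x₁ (I \ {e})) := by
          intro h
          have hx₁z : x₁ ∈ M.closure (insert z (I \ {e})) := mem_closure_insert hzcl h
          apply hz𝓕
          refine up_mem h𝓕 hF₁ (closure_subset_closure_of_subset_closure ?_)
          intro u hu
          rcases hu with rfl | hu
          · exact hx₁z
          · exact M.subset_closure _ hzind.subset_ground (mem_insert_of_mem _ hu)
        have hBF₁ : B ⊆ M.closure (insert x₁ (I \ {e})) := by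
          intro x₂ hx₂B
          by_contra hx₂F₁
          have hx₂cl : x₂ ∉ M.closure (I \ {e}) := fun h =>
            hx₂F₁ (M.closure_subset_closure (subset_insert _ _) h)
          have hx₂E : x₂ ∈ M.E := hBi.subset_ground hx₂B
          have hx₂I₀ : x₂ ∉ I \ {e} := fun h =>
            hx₂cl (M.subset_closure _ hI₀.subset_ground h)
          have hx₂ind : M.Indep (insert x₂ (I \ {e})) := by
            rw [hI₀.insert_indep_iff_of_notMem hx₂I₀]
            exact ⟨hx₂E, hx₂cl⟩
          exact hclI₀ (pair_lemma h𝓕 hx₁ind hx₁cl hx₂E hx₂F₁ hF₁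
            (hcon' x₂ hx₂B hx₂I₀ hx₂ind))
        have : M.E ⊆ M.closure (insert x₁ (I \ {e})) := by
          rw [← hBbase.closure_eq]
          exact closure_subset_closure_of_subset_closure hBF₁
        exact hzF₁ (this hzE)
    · -- e ∉ I, e ∉ B
      have hIi : M.Indep I := by rw [← diff_singleton_eq_self heI]; exact hI.1
      have hInotbase : ¬ M.IsBase I := by
        intro hIbase
        apply hInmax
        refine ⟨hI, fun K hK hIK => ?_⟩
        have hIK₀ : I ⊆ K \ {e} := fun x hx =>
          ⟨hIK hx, fun hxe => he (mem_singleton_iff.mp hxe ▸ hIi.subset_ground hx)⟩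
        have hKeq : K \ {e} = I := (hIbase.eq_of_subset_indep hK.1 hIK₀).symm
        intro x hxK
        rcases eq_or_ne x e with rfl | hxe
        · exfalso
          have := hK.2 hxK
          rw [hKeq, hIbase.closure_eq] at this
          exact this hE𝓕
        · exact hKeq ▸ (⟨hxK, hxe⟩ : x ∈ K \ {e})
      obtain ⟨x, hx, hxind⟩ := hIi.exists_insert_of_not_isBase hInotbase hBbase
      refine ⟨x, hx, ?_, fun hein => ?_⟩
      · have hxe : x ≠ e := fun h => heB (h ▸ hx.1)
        rw [(insert_diff_singleton_comm hxe I).symm, diff_singleton_eq_self heI]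
        exact hxind
      · exfalso
        rcases hein with h | h
        · exact heB (h ▸ hx.1)
        · exact heI h

/-- The extension matroid. -/
private def extIM (M : Matroid α) (𝓕 : Set (Set α)) (e : α)
    (h𝓕 : M.IsModularCut 𝓕) (he : e ∉ M.E) : IndepMatroid α where
  E := insert e M.E
  Indep := ExtIndep M 𝓕 e
  indep_empty := ⟨by simp, by simp⟩
  indep_subset := fun I J hJ hIJ => extIndep_subset h𝓕 hJ hIJ
  indep_aug := fun I B hI hImax hBmax => extIndep_aug h𝓕 he hI hImax hBmax
  indep_maximal := extIndep_maximal h𝓕 he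
  subset_ground := fun I hI => extIndep_ground hI

private lemma extM_indep (h𝓕 : M.IsModularCut 𝓕) (he : e ∉ M.E) :
    (extIM M 𝓕 e h𝓕 he).matroid.Indep I ↔ ExtIndep M 𝓕 e I :=
  IndepMatroid.matroid_indep_iff

private lemma extM_E (h𝓕 : M.IsModularCut 𝓕) (he : e ∉ M.E) :
    (extIM M 𝓕 e h𝓕 he).matroid.E = insert e M.E := rfl

private lemma extM_delete (h𝓕 : M.IsModularCut 𝓕) (he : e ∉ M.E) :
    (extIM M 𝓕 e h𝓕 he).matroid.delete' {e} = M := by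
  have hgr : (extIM M 𝓕 e h𝓕 he).matroid.E \ {e} = M.E := by
    rw [extM_E h𝓕 he, insert_diff_self_of_notMem he]
  refine ext_indep ?_ (fun J hJ => ?_)
  · rw [delete', restrict_ground_eq, hgr]
  · rw [delete', restrict_ground_eq, hgr] at hJ
    rw [delete', restrict_indep_iff, extM_indep h𝓕 he, hgr]
    have heJ : e ∉ J := fun h => he (hJ h)
    constructor
    · rintro ⟨⟨h1, _⟩, _⟩
      rwa [diff_singleton_eq_self heJ] at h1
    · intro hind
      exact ⟨⟨by rwa [diff_singleton_eq_self heJ], fun h => absurd h heJ⟩, hJ⟩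

private lemma extM_closure (h𝓕 : M.IsModularCut 𝓕) (he : e ∉ M.E) {F : Set α}
    (hF : M.IsFlat F) : e ∈ (extIM M 𝓕 e h𝓕 he).matroid.closure F ↔ F ∈ 𝓕 := by
  set N := (extIM M 𝓕 e h𝓕 he).matroid with hN
  obtain ⟨I, hI⟩ := M.exists_isBasis F hF.subset_ground
  have heI : e ∉ I := fun h => he (hI.indep.subset_ground h)
  have hIN : N.Indep I := by
    rw [hN, extM_indep h𝓕 he]
    exact ⟨by rw [diff_singleton_eq_self heI]; exact hI.indep, fun h => absurd h heI⟩
  have hbasN : N.IsBasis I F := by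
    refine ⟨⟨⟨hIN, hI.subset⟩, fun K hK hIK => ?_⟩, ?_⟩
    · have hKE : K ⊆ M.E := hK.2.trans hF.subset_ground
      have heK : e ∉ K := fun h => he (hKE h)
      have hKM : M.Indep K := by
        have := ((extM_indep h𝓕 he).mp hK.1).1
        rwa [diff_singleton_eq_self heK] at this
      exact hI.1.2 ⟨hKM, hK.2⟩ hIK
    · rw [hN, extM_E h𝓕 he]
      exact hF.subset_ground.trans (subset_insert _ _)
  have hclIF : N.closure I = N.closure F := hbasN.closure_eq_closure
  rw [← hclIF, hIN.mem_closure_iff_of_notMem heI, dep_iff]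
  have hinsE : insert e I ⊆ N.E := by
    rw [hN, extM_E h𝓕 he]
    exact insert_subset (mem_insert _ _)
      (fun x hx => mem_insert_of_mem _ (hI.indep.subset_ground hx))
  rw [hN, extM_indep h𝓕 he]
  have hdiff : insert e I \ {e} = I := by
    rw [insert_diff_of_mem _ (mem_singleton e), diff_singleton_eq_self heI]
  have hclI : M.closure I = F := by
    rw [hI.closure_eq_closure, hF.closure]
  constructor
  · rintro ⟨hnind, _⟩
    by_contra hF𝓕
    apply hnind
    refine ⟨by rw [hdiff]; exact hI.indep, fun _ => ?_⟩
    rw [hdiff, hclI]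
    exact hF𝓕
  · intro hF𝓕
    refine ⟨fun hind => ?_, hinsE⟩
    have := hind.2 (mem_insert _ _)
    rw [hdiff, hclI] at this
    exact this hF𝓕

private lemma ext_unique (h𝓕 : M.IsModularCut 𝓕) (he : e ∉ M.E) {N : Matroid α}
    (hNE : N.E = insert e M.E) (hNdel : N.delete' {e} = M)
    (hNcl : ∀ F, M.IsFlat F → (e ∈ N.closure F ↔ F ∈ 𝓕)) {I : Set α} (hIN : I ⊆ N.E) :
    N.Indep I ↔ ExtIndep M 𝓕 e I := by
  have hrestr : N ↾ M.E = M := by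
    rw [delete'] at hNdel
    rwa [hNE, insert_diff_self_of_notMem he] at hNdel
  have hindE : ∀ J, J ⊆ M.E → (N.Indep J ↔ M.Indep J) := by
    intro J hJ
    rw [← hrestr, restrict_indep_iff]
    exact ⟨fun h => ⟨h, hJ⟩, fun h => h.1⟩
  have hME : M.E ⊆ N.E := by rw [hNE]; exact subset_insert _ _
  have hclsub : ∀ J, J ⊆ M.E → M.closure J ⊆ N.closure J := by
    intro J hJE x hx
    have hxE : x ∈ M.E := M.closure_subset_ground J hx
    obtain ⟨K, hK⟩ := M.exists_isBasis J hJE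
    have hxK : x ∈ M.closure K := by rwa [hK.closure_eq_closure]
    by_cases hxKm : x ∈ K
    · exact N.subset_closure J (hJE.trans hME) (hK.subset hxKm)
    · have hKN : N.Indep K := (hindE K hK.indep.subset_ground).mpr hK.indep
      have hdep : ¬ N.Indep (insert x K) := by
        intro hind
        have hMind : M.Indep (insert x K) :=
          (hindE _ (insert_subset hxE hK.indep.subset_ground)).mp hind
        rw [hK.indep.insert_indep_iff_of_notMem hxKm] at hMind
        exact hMind.2 hxK
      have hxNK : x ∈ N.closure K := by
        rw [hKN.mem_closure_iff_of_notMem hxKm, dep_iff]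
        exact ⟨hdep, insert_subset (hME hxE) hKN.subset_ground⟩
      exact N.closure_subset_closure hK.subset hxNK
  have heE : e ∈ N.E := by rw [hNE]; exact mem_insert _ _
  by_cases heI : e ∈ I
  · have hI₀E : I \ {e} ⊆ M.E := by
      intro x hx
      have := hIN hx.1
      rw [hNE] at this
      exact this.resolve_left hx.2
    have heI₀ : e ∉ I \ {e} := fun h => h.2 rfl
    constructor
    · intro hNI
      have hI₀N : N.Indep (I \ {e}) := hNI.subset diff_subset
      have hI₀M : M.Indep (I \ {e}) := (hindE _ hI₀E).mp hI₀N
      refine ⟨hI₀M, fun _ hcl𝓕 => ?_⟩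
      have h1 : e ∈ N.closure (M.closure (I \ {e})) :=
        (hNcl _ (flat_closure' M _)).mpr hcl𝓕
      have h3 : e ∈ N.closure (I \ {e}) :=
        N.closure_subset_closure_of_subset_closure (hclsub _ hI₀E) h1
      have hins : N.Indep (insert e (I \ {e})) := by
        refine hNI.subset ?_
        rw [insert_diff_singleton, insert_eq_self.mpr heI]
      rw [hI₀N.insert_indep_iff_of_notMem heI₀] at hins
      exact hins.2 h3
    · rintro ⟨hI₀M, hcl⟩
      have hcl := hcl heI
      have hI₀N : N.Indep (I \ {e}) := (hindE _ hI₀E).mpr hI₀M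
      have heNcl : e ∉ N.closure (I \ {e}) := by
        intro hecl
        have h1 : e ∈ N.closure (M.closure (I \ {e})) :=
          N.closure_subset_closure (M.subset_closure _ hI₀E) hecl
        exact hcl ((hNcl _ (flat_closure' M _)).mp h1)
      have hins : N.Indep (insert e (I \ {e})) := by
        rw [hI₀N.insert_indep_iff_of_notMem heI₀]
        exact ⟨heE, heNcl⟩
      rwa [insert_diff_singleton, insert_eq_self.mpr heI] at hins
  · have hIE : I ⊆ M.E := by
      intro x hx
      have := hIN hx
      rw [hNE] at this
      exact this.resolve_left (fun h => heI (h ▸ hx))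
    rw [hindE I hIE, ExtIndep, diff_singleton_eq_self heI]
    exact ⟨fun h => ⟨h, fun hc => absurd hc heI⟩, fun h => h.1⟩

end ExtensionAux2


/-- For every modular cut `𝓕` of `M` and element `e ∉ E(M)`, there is a
unique matroid `M'` on `E(M) ∪ {e}` with `M' \ e = M` in which the flats of `M`
spanning `e` are precisely the members of `𝓕`. -/
theorem existsUnique_extension_of_isModularCut (M : Matroid α) {𝓕 : Set (Set α)}
    (h𝓕 : M.IsModularCut 𝓕) {e : α} (he : e ∉ M.E) :
    ∃! M' : Matroid α, M'.E = insert e M.E ∧ M'.delete' {e} = M ∧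
      ∀ F, M.IsFlat F → (e ∈ M'.closure F ↔ F ∈ 𝓕) := by
  refine ⟨(extIM M 𝓕 e h𝓕 he).matroid,
    ⟨extM_E h𝓕 he, extM_delete h𝓕 he, fun F hF => extM_closure h𝓕 he hF⟩, ?_⟩
  rintro N ⟨hNE, hNdel, hNcl⟩
  refine ext_indep (by rw [hNE, extM_E h𝓕 he]) (fun I hIN => ?_)
  rw [ext_unique h𝓕 he hNE hNdel hNcl hIN, extM_indep h𝓕 he]
end Matroid
end

section
/- Let N be a quotient of a matroid M such that M and N have a common basis. If N is finitary or M* is finitary, then M = N. -/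
open Set

namespace Matroid

variable {α : Type*} {ι : Type*}

/-- Key auxiliary lemma: if `N` and `M` have the same ground set, every `N`-independent set
is `M`-independent, every `M`-spanning set is `N`-spanning, `N` is finitary, and `M` and `N`
have a common base, then `M = N`. -/
private lemma key_aux {M N : Matroid α} (hE : N.E = M.E)
    (hi : ∀ ⦃I : Set α⦄, N.Indep I → M.Indep I)
    (hs : ∀ ⦃S : Set α⦄, M.Spanning S → N.Spanning S)
    (hfin : N.Finitary) {B : Set α} (hBM : M.IsBase B) (hBN : N.IsBase B) : M = N := by
  -- Every base of `M` whose difference with `B` is finite is a base of `N`.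
  have hbase : ∀ B', M.IsBase B' → (B' \ B).Finite → N.IsBase B' := by
    intro B' hB' hfin'
    have hsp : N.Spanning B' := hs hB'.spanning
    obtain ⟨B'', hB'', hB''B'⟩ := hsp.exists_isBase_subset
    have h1 : (B \ B').encard = (B' \ B).encard := hBM.encard_diff_comm hB'
    have h2 : (B \ B'').encard = (B'' \ B).encard := hBN.encard_diff_comm hB''
    have h3 : (B'' \ B).encard ≤ (B' \ B).encard :=
      encard_le_encard (diff_subset_diff_left hB''B')
    have h4 : (B \ B').encard ≤ (B \ B'').encard :=
      encard_le_encard (diff_subset_diff_right hB''B')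
    -- all four quantities are equal
    have heq1 : (B \ B'').encard = (B' \ B).encard :=
      le_antisymm (h2.trans_le h3) (h1 ▸ h4)
    have heq2 : (B'' \ B).encard = (B' \ B).encard :=
      h2.symm.trans heq1
    have hfinBB'' : (B \ B'').Finite := by
      rw [← encard_lt_top_iff, heq1, encard_lt_top_iff]; exact hfin'
    have hd1 : B'' \ B = B' \ B :=
      hfin'.eq_of_subset_of_encard_le' (diff_subset_diff_left hB''B') heq2.symm.le
    have hd2 : B \ B' = B \ B'' :=
      hfinBB''.eq_of_subset_of_encard_le' (diff_subset_diff_right hB''B') (heq1.trans h1.symm).le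
    have hB'B'' : B' ⊆ B'' := by
      intro x hx
      by_cases hxB : x ∈ B
      · by_contra hxB''
        have : x ∈ B \ B'' := ⟨hxB, hxB''⟩
        rw [← hd2] at this
        exact this.2 hx
      · exact (hd1.symm.subset ⟨hx, hxB⟩).1
    rwa [← hB''B'.antisymm hB'B'']
  -- Every base of `M` is `N`-independent.
  have hNi : ∀ B', M.IsBase B' → N.Indep B' := by
    intro B' hB'
    refine Finitary.indep_of_forall_finite (M := N) (self := hfin) B' (fun J hJB' hJfin => ?_)
    obtain ⟨B₂, hB₂, hJB₂, hB₂u⟩ := (hB'.indep.subset hJB').exists_isBase_subset_union_isBase hBM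
    have hB₂B : (B₂ \ B).Finite := hJfin.subset (fun x hx =>
      ((hB₂u hx.1).elim id (fun hxB => absurd hxB hx.2)))
    exact ((hbase B₂ hB₂ hB₂B).indep.subset hJB₂)
  -- conclude
  refine ext_isBase (hE.symm) (fun ⦃B'⦄ _ => ⟨fun hB' => ?_, fun hB' => ?_⟩)
  · exact (hNi B' hB').isBase_of_spanning (hs hB'.spanning)
  · obtain ⟨B₁, hB₁, hB'B₁⟩ := (hi hB'.indep).exists_isBase_superset
    rwa [hB'.eq_of_subset_isBase ((hNi B₁ hB₁).isBase_of_spanning (hs hB₁.spanning)) hB'B₁]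

/-- If `N` is a quotient of `M`, with `N` finitary or `M✶` finitary,
and `M` and `N` have a common base, then `M = N`. -/
theorem eq_of_isQuotient_of_common_base (M N : Matroid α) (hQ : N.IsQuotient M)
    (hfin : N.Finitary ∨ M✶.Finitary) {B : Set α} (hBM : M.IsBase B) (hBN : N.IsBase B) :
    M = N := by
  obtain ⟨hE, hcl⟩ := hQ
  have hi : ∀ ⦃I : Set α⦄, N.Indep I → M.Indep I := by
    intro I hI
    rw [indep_iff_forall_notMem_closure_diff (hI.subset_ground.trans hE.subset)]
    exact fun e he hecl => hI.notMem_closure_diff_of_mem he (hcl _ hecl)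
  have hs : ∀ ⦃S : Set α⦄, M.Spanning S → N.Spanning S := by
    intro S hS
    have hSE : S ⊆ N.E := hE ▸ hS.subset_ground
    rw [spanning_iff_ground_subset_closure hSE]
    rw [hE, ← hS.closure_eq]
    exact hcl S
  rcases hfin with hNfin | hMdfin
  · exact key_aux hE hi hs hNfin hBM hBN
  · -- dual argument
    have hE' : M✶.E = N✶.E := by rw [dual_ground, dual_ground, hE]
    have hi' : ∀ ⦃I : Set α⦄, M✶.Indep I → N✶.Indep I := by
      intro I hI
      have hIE : I ⊆ M.E := hI.subset_ground
      have hIN : I ⊆ N.E := hE ▸ hIE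
      have hMsp : M.Spanning (M.E \ I) := (coindep_iff_compl_spanning hIE).1 hI
      have hNsp : N.Spanning (N.E \ I) := hE ▸ hs hMsp
      exact (coindep_iff_compl_spanning hIN).2 hNsp
    have hs' : ∀ ⦃S : Set α⦄, N✶.Spanning S → M✶.Spanning S := by
      intro S hS
      have hSE : S ⊆ M.E := hE ▸ hS.subset_ground
      obtain ⟨D, hD, hDS⟩ := hS.exists_isBase_subset
      have hNDbase : N.IsBase (N.E \ D) := hD.compl_isBase_of_dual
      obtain ⟨B₁, hB₁, hDB₁⟩ := (hi hNDbase.indep).exists_isBase_superset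
      refine (spanning_iff_exists_isBase_subset (M := M✶) hSE).2 ⟨M.E \ B₁, hB₁.compl_isBase_dual, ?_⟩
      intro x hx
      by_contra hxS
      have hxD : x ∈ N.E \ D := ⟨hE ▸ hx.1, fun hxD => hxS (hDS hxD)⟩
      exact hx.2 (hDB₁ hxD)
    have hBM' : N✶.IsBase (N.E \ B) := hBN.compl_isBase_dual
    have hBN' : M✶.IsBase (N.E \ B) := hE ▸ hBM.compl_isBase_dual
    have : N✶ = M✶ := key_aux hE' hi' hs' hMdfin hBM' hBN'
    exact (dual_inj.1 this).symm
end Matroid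
end
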